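/- arXiv:1611.06558 — 2 statements merged into one kernel-verified Lean document; each statement's English description precedes it below -/
import Mathlib

section
/- Let ψ ∈ 𝒯ₙ be such that ∂ψ/∂sᵢ|_{s=−0} ≠ ∞ for all i = 1,…,n. Then for every pair of commuting families A = (A₁,…,Aₙ) and B = (B₁,…,Bₙ) from Gen(X)ⁿ such that each Aᵢ − Bᵢ is bounded and D(Aᵢ) = D(Bᵢ), one has ‖ψ(A) − ψ(B)‖ ≤ M^{n+1} · Σᵢ₌₁ⁿ (∂ψ/∂sᵢ|_{s=−0}) ‖Aᵢ − Bᵢ‖, where M := max{M_A, M_B}. -/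
open MeasureTheory Complex ContinuousLinearMap

noncomputable section

/-- A generator of a uniformly bounded `C₀`-semigroup on a complex Banach space `X`,
bundled together with its semigroup `T`, its (maximal) domain `dom` and its action
`gen` (extended by `0` outside of the domain). -/
structure GenOp (X : Type*) [NormedAddCommGroup X] [NormedSpace ℂ X] where
  T : ℝ → X →L[ℂ] X
  T_zero : T 0 = 1
  T_add : ∀ ⦃s t : ℝ⦄, 0 ≤ s → 0 ≤ t → T (s + t) = (T s).comp (T t)
  strong_cont : ∀ x : X, ContinuousOn (fun t => T t x) (Set.Ici 0)
  bounded : ∃ M : ℝ, ∀ t : ℝ, 0 ≤ t → ‖T t‖ ≤ M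
  dom : Submodule ℂ X
  gen : X → X
  mem_dom_iff : ∀ x : X, x ∈ dom ↔ ∃ y : X,
    Filter.Tendsto (fun t : ℝ => (t : ℂ)⁻¹ • (T t x - x)) (nhdsWithin 0 (Set.Ioi 0)) (nhds y)
  gen_spec : ∀ x ∈ dom,
    Filter.Tendsto (fun t : ℝ => (t : ℂ)⁻¹ • (T t x - x)) (nhdsWithin 0 (Set.Ioi 0))
      (nhds (gen x))
  gen_zero : ∀ x, x ∉ dom → gen x = 0

variable {X : Type*} [NormedAddCommGroup X] [NormedSpace ℂ X] [CompleteSpace X]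

/-- Two semigroup generators commute if the corresponding semigroups commute. -/
def GenOp.Commutes (A B : GenOp X) : Prop :=
  ∀ ⦃s t : ℝ⦄, 0 ≤ s → 0 ≤ t → (A.T s).comp (B.T t) = (B.T t).comp (A.T s)

/-- The `n`-parameter semigroup `T_A(u) = T_{A₁}(u₁) ⋯ T_{Aₙ}(uₙ)` associated with a
family `A = (A₁, …, Aₙ)` of semigroup generators. -/
def semigrProd {n : ℕ} (A : Fin n → GenOp X) (u : Fin n → ℝ) : X →L[ℂ] X :=
  (List.ofFn fun i => (A i).T (u i)).prod

/-- The representing measure of a Bernstein function `ψ ∈ 𝒯ₙ` with `c₀ = 0`, `c₁ = 0`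
in its integral representation: a positive measure `μ` on `ℝ₊ⁿ \ {0}` such that
`e^{s·u} - 1` is `μ`-integrable for every `s ∈ (-∞,0)ⁿ`.  The associated Bernstein
function is `ψ(s) = ∫ (e^{s·u} - 1) dμ(u)`, see `bPsi`. -/
structure BernsteinMeasure (n : ℕ) where
  μ : Measure (Fin n → ℝ)
  support : μ {u | ¬ ((∀ i, 0 ≤ u i) ∧ u ≠ 0)} = 0
  integrable : ∀ s : Fin n → ℝ, (∀ i, s i < 0) →
    Integrable (fun u => Real.exp (∑ i, s i * u i) - 1) μ

/-- The Bernstein function `ψ(s) = ∫ (e^{s·u} - 1) dμ(u)` of `n` variables associated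
with a representing measure `μ`. -/
def bPsi {n : ℕ} (ρ : BernsteinMeasure n) (s : Fin n → ℝ) : ℝ :=
  ∫ u, (Real.exp (∑ i, s i * u i) - 1) ∂ρ.μ

section Aux

open Filter Topology Set

variable {X : Type*} [NormedAddCommGroup X] [NormedSpace ℂ X] [CompleteSpace X]

/-- Real-scalar version of `gen_spec`. -/
lemma GenOp.gen_spec_real (G : GenOp X) {x : X} (hx : x ∈ G.dom) :
    Tendsto (fun t : ℝ => t⁻¹ • (G.T t x - x)) (𝓝[>] 0) (𝓝 (G.gen x)) := by
  have h := G.gen_spec x hx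
  refine h.congr fun t => ?_
  rw [show ((t : ℂ))⁻¹ = ((t⁻¹ : ℝ) : ℂ) by push_cast; ring, Complex.coe_smul]

/-- If a continuous linear map commutes with the semigroup, it preserves the domain and
commutes with the generator. -/
lemma GenOp.comm_mem_dom (G : GenOp X) {C : X →L[ℂ] X}
    (hC : ∀ ⦃h : ℝ⦄, 0 ≤ h → ∀ z, G.T h (C z) = C (G.T h z)) {x : X} (hx : x ∈ G.dom) :
    C x ∈ G.dom ∧ G.gen (C x) = C (G.gen x) := by
  have h1 : Tendsto (fun t : ℝ => (t : ℂ)⁻¹ • (G.T t (C x) - C x)) (𝓝[>] 0)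
      (𝓝 (C (G.gen x))) := by
    have h2 := (C.continuous.tendsto _).comp (G.gen_spec x hx)
    refine h2.congr' ?_
    filter_upwards [self_mem_nhdsWithin] with t ht
    simp only [Function.comp_apply, _root_.map_smul, map_sub, hC ht.le x]
  have hmem : C x ∈ G.dom := (G.mem_dom_iff _).2 ⟨_, h1⟩
  exact ⟨hmem, tendsto_nhds_unique (G.gen_spec _ hmem) h1⟩

lemma GenOp.T_comm_self (G : GenOp X) {s h : ℝ} (hs : 0 ≤ s) (hh : 0 ≤ h) (z : X) :
    G.T h (G.T s z) = G.T s (G.T h z) := by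
  have e1 := G.T_add hh hs
  have e2 := G.T_add hs hh
  rw [add_comm] at e1
  have := e1.symm.trans e2
  exact DFunLike.congr_fun this z

lemma GenOp.T_mem_dom (G : GenOp X) {s : ℝ} (hs : 0 ≤ s) {x : X} (hx : x ∈ G.dom) :
    G.T s x ∈ G.dom ∧ G.gen (G.T s x) = G.T s (G.gen x) :=
  G.comm_mem_dom (fun _ hh z => G.T_comm_self hs hh z) hx

/-- Joint continuity of `(t, a) ↦ T t (f a)` for a uniformly bounded semigroup. -/
lemma GenOp.jointCont (G : GenOp X) {M : ℝ} (hM : ∀ t : ℝ, 0 ≤ t → ‖G.T t‖ ≤ M)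
    {α : Type*} [TopologicalSpace α] {f : α → X} {s : Set α} (hf : ContinuousOn f s) :
    ContinuousOn (fun p : ℝ × α => G.T p.1 (f p.2)) (Set.Ici 0 ×ˢ s) := by
  rintro ⟨t, a⟩ ⟨ht, ha⟩
  simp only [Set.mem_Ici] at ht
  have hsnd : Tendsto (fun p : ℝ × α => f p.2) (𝓝[Set.Ici 0 ×ˢ s] (t, a)) (𝓝 (f a)) := by
    have h0 : Tendsto Prod.snd (𝓝[Set.Ici 0 ×ˢ s] (t, a)) (𝓝[s] a) :=
      continuous_snd.continuousWithinAt.tendsto_nhdsWithin (fun p hp => hp.2)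
    exact Filter.Tendsto.comp (hf a ha) h0
  have hfst : Tendsto (fun p : ℝ × α => G.T p.1 (f a)) (𝓝[Set.Ici 0 ×ˢ s] (t, a))
      (𝓝 (G.T t (f a))) := by
    have h0 : Tendsto Prod.fst (𝓝[Set.Ici 0 ×ˢ s] (t, a)) (𝓝[Set.Ici 0] t) :=
      continuous_fst.continuousWithinAt.tendsto_nhdsWithin (fun p hp => hp.1)
    exact Filter.Tendsto.comp (G.strong_cont (f a) t ht) h0
  have key : Tendsto (fun p : ℝ × α => G.T p.1 (f p.2 - f a)) (𝓝[Set.Ici 0 ×ˢ s] (t, a))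
      (𝓝 0) := by
    have hb : ∀ᶠ p : ℝ × α in 𝓝[Set.Ici 0 ×ˢ s] (t, a),
        ‖G.T p.1 (f p.2 - f a)‖ ≤ max M 0 * ‖f p.2 - f a‖ := by
      filter_upwards [self_mem_nhdsWithin] with p hp
      exact ((G.T p.1).le_opNorm _).trans
        (mul_le_mul_of_nonneg_right ((hM p.1 hp.1).trans (le_max_left _ _)) (norm_nonneg _))
    have hg : Tendsto (fun p : ℝ × α => max M 0 * ‖f p.2 - f a‖) (𝓝[Set.Ici 0 ×ˢ s] (t, a))
        (𝓝 0) := by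
      have := ((hsnd.sub_const (f a)).norm).const_mul (max M 0)
      simpa using this
    exact squeeze_zero_norm' hb hg
  have := key.add hfst
  rw [zero_add] at this
  refine this.congr fun p => ?_
  simp [map_sub]

/-- The Duhamel-type Lipschitz estimate for a single pair of semigroups. -/
lemma duhamel (A B : GenOp X) (M : ℝ)
    (hMA : ∀ t : ℝ, 0 ≤ t → ‖A.T t‖ ≤ M) (hMB : ∀ t : ℝ, 0 ≤ t → ‖B.T t‖ ≤ M)
    (hdom : A.dom = B.dom) (hdense : Dense (A.dom : Set X))
    (D : X →L[ℂ] X) (hD : ∀ x ∈ A.dom, D x = A.gen x - B.gen x) :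
    ∀ t : ℝ, 0 ≤ t → ∀ y : X, ‖A.T t y - B.T t y‖ ≤ M ^ 2 * ‖D‖ * t * ‖y‖ := by
  have hM0 : 0 ≤ M := (norm_nonneg (A.T 0)).trans (hMA 0 le_rfl)
  intro t ht
  -- first, for x in the common domain
  have key : ∀ x ∈ A.dom, ‖A.T t x - B.T t x‖ ≤ M ^ 2 * ‖D‖ * t * ‖x‖ := by
    intro x hxA
    have hxB : x ∈ B.dom := hdom ▸ hxA
    set g : ℝ → X := fun s => A.T (t - s) (B.T s x) with hg
    set C : ℝ := M * (‖D‖ * (M * ‖x‖)) with hC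
    -- continuity of g on [0, t]
    have hgc : ContinuousOn g (Icc 0 t) := by
      have hjoint : ContinuousOn (fun p : ℝ × ℝ => A.T p.1 (B.T p.2 x))
          (Set.Ici 0 ×ˢ Set.Ici 0) := A.jointCont hMA (B.strong_cont x)
      have hmap : MapsTo (fun s : ℝ => ((t - s, s) : ℝ × ℝ)) (Icc 0 t)
          (Set.Ici 0 ×ˢ Set.Ici 0) := fun s hs => ⟨by simp [hs.2], hs.1⟩
      exact hjoint.comp ((continuous_const.sub continuous_id).prodMk
        continuous_id).continuousOn hmap
    -- right derivative of g
    have hder : ∀ s ∈ Ico 0 t, HasDerivWithinAt g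
        (A.T (t - s) (B.gen (B.T s x) - A.gen (B.T s x))) (Ici s) s := by
      intro s hs
      have hs0 : (0:ℝ) ≤ s := hs.1
      have hst : s < t := hs.2
      set y : X := B.T s x with hy
      have hyB : y ∈ B.dom ∧ B.gen y = B.T s (B.gen x) := B.T_mem_dom hs0 hxB
      have hyA : y ∈ A.dom := hdom ▸ hyB.1
      rw [hasDerivWithinAt_iff_tendsto_slope, Set.Ici_sdiff_left]
      set w : ℝ → X := fun r =>
        (r - s)⁻¹ • (B.T (r - s) y - y) - (r - s)⁻¹ • (A.T (r - s) y - y) with hw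
      have hsub : Tendsto (fun r : ℝ => r - s) (𝓝[>] s) (𝓝[>] 0) := by
        apply tendsto_nhdsWithin_of_tendsto_nhds_of_eventually_within
        · have h0 : Tendsto (fun r : ℝ => r - s) (𝓝 s) (𝓝 (s - s)) := tendsto_id.sub_const s
          rw [sub_self] at h0
          exact h0.mono_left nhdsWithin_le_nhds
        · filter_upwards [self_mem_nhdsWithin] with r hr
          simpa [sub_pos] using hr
      have hwlim : Tendsto w (𝓝[>] s) (𝓝 (B.gen y - A.gen y)) :=
        ((B.gen_spec_real hyB.1).comp hsub).sub ((A.gen_spec_real hyA).comp hsub)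
      have hjoint : ContinuousOn (fun p : ℝ × X => A.T p.1 p.2)
          (Set.Ici 0 ×ˢ (Set.univ : Set X)) := A.jointCont hMA continuousOn_id
      have hpt : ((t - s, B.gen y - A.gen y) : ℝ × X) ∈ Set.Ici 0 ×ˢ (Set.univ : Set X) :=
        ⟨by simp [hst.le], trivial⟩
      have htuple : Tendsto (fun r : ℝ => ((t - r, w r) : ℝ × X)) (𝓝[>] s)
          (𝓝[Set.Ici 0 ×ˢ (Set.univ : Set X)] (t - s, B.gen y - A.gen y)) := by
        apply tendsto_nhdsWithin_of_tendsto_nhds_of_eventually_within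
        · exact (((continuous_const.sub continuous_id).tendsto s).mono_left
            nhdsWithin_le_nhds).prodMk_nhds hwlim
        · have hev : ∀ᶠ r in 𝓝 s, r < t := eventually_lt_nhds hst
          filter_upwards [hev.filter_mono nhdsWithin_le_nhds] with r hr
          exact ⟨by simp [hr.le], trivial⟩
      have hT : Tendsto (fun r : ℝ => A.T (t - r) (w r)) (𝓝[>] s)
          (𝓝 (A.T (t - s) (B.gen y - A.gen y))) :=
        Filter.Tendsto.comp (hjoint _ hpt) htuple
      refine hT.congr' ?_
      have hev : ∀ᶠ r in 𝓝[>] s, s < r ∧ r < t := by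
        have h1 : ∀ᶠ r in 𝓝 s, r < t := eventually_lt_nhds hst
        filter_upwards [h1.filter_mono nhdsWithin_le_nhds, self_mem_nhdsWithin] with r h2 h3
        exact ⟨h3, h2⟩
      filter_upwards [hev] with r hr
      obtain ⟨hsr, hrt⟩ := hr
      have hrs0 : (0:ℝ) ≤ r - s := by linarith
      have e1 : B.T r x = B.T (r - s) y := by
        have e := B.T_add hrs0 hs0
        rw [show (r - s) + s = r by ring] at e
        rw [e]; rfl
      have e2 : A.T (t - s) y = A.T (t - r) (A.T (r - s) y) := by
        have e := A.T_add (show (0:ℝ) ≤ t - r by linarith) hrs0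
        rw [show (t - r) + (r - s) = t - s by ring] at e
        rw [e]; rfl
      have : g r - g s = A.T (t - r) ((B.T (r - s) y - y) - (A.T (r - s) y - y)) := by
        simp only [hg, e1, ← hy, e2, map_sub]
        abel
      rw [slope_def_module, this, hw, ← ContinuousLinearMap.map_smul_of_tower, smul_sub]
    -- bound on the derivative
    have hbound : ∀ s ∈ Ico 0 t,
        ‖A.T (t - s) (B.gen (B.T s x) - A.gen (B.T s x))‖ ≤ C := by
      intro s hs
      set y : X := B.T s x with hy
      have hyB : y ∈ B.dom := (B.T_mem_dom hs.1 hxB).1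
      have hyA : y ∈ A.dom := hdom ▸ hyB
      have hDy : B.gen y - A.gen y = -(D y) := by rw [hD y hyA]; abel
      have h1 : ‖A.T (t - s) (B.gen y - A.gen y)‖ ≤ M * ‖D y‖ := by
        rw [hDy, map_neg, norm_neg]
        exact ((A.T (t - s)).le_opNorm _).trans
          (mul_le_mul_of_nonneg_right (hMA _ (by linarith [hs.2])) (norm_nonneg _))
      have h2 : ‖D y‖ ≤ ‖D‖ * ‖y‖ := D.le_opNorm y
      have h3 : ‖y‖ ≤ M * ‖x‖ := ((B.T s).le_opNorm x).trans
        (mul_le_mul_of_nonneg_right (hMB s hs.1) (norm_nonneg _))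
      calc ‖A.T (t - s) (B.gen y - A.gen y)‖ ≤ M * ‖D y‖ := h1
        _ ≤ M * (‖D‖ * ‖y‖) := mul_le_mul_of_nonneg_left h2 hM0
        _ ≤ C := by
            rw [hC]
            exact mul_le_mul_of_nonneg_left
              (mul_le_mul_of_nonneg_left h3 (norm_nonneg D)) hM0
    have := norm_image_sub_le_of_norm_deriv_right_le_segment hgc hder hbound t
      (by simp [ht])
    have hg0 : g 0 = A.T t x := by simp [hg, B.T_zero]
    have hgt : g t = B.T t x := by simp [hg, A.T_zero]
    rw [hg0, hgt] at this
    calc ‖A.T t x - B.T t x‖ = ‖B.T t x - A.T t x‖ := by rw [norm_sub_rev]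
      _ ≤ C * (t - 0) := this
      _ = M ^ 2 * ‖D‖ * t * ‖x‖ := by rw [hC]; ring
  -- extend by density
  intro y
  have hclosed : IsClosed {z : X | ‖A.T t z - B.T t z‖ ≤ M ^ 2 * ‖D‖ * t * ‖z‖} := by
    apply isClosed_le
    · exact ((A.T t).continuous.sub (B.T t).continuous).norm
    · exact continuous_const.mul continuous_norm
  have hsub : (A.dom : Set X) ⊆ {z : X | ‖A.T t z - B.T t z‖ ≤ M ^ 2 * ‖D‖ * t * ‖z‖} :=
    fun z hz => key z hz
  have : closure (A.dom : Set X) ⊆ {z : X | ‖A.T t z - B.T t z‖ ≤ M ^ 2 * ‖D‖ * t * ‖z‖} :=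
    hclosed.closure_subset_iff.2 hsub
  exact this (hdense y)

end Aux

section Aux2

open Filter Topology Set

variable {X : Type*} [NormedAddCommGroup X] [NormedSpace ℂ X] [CompleteSpace X]

lemma semigrProd_zero (A : Fin 0 → GenOp X) (u : Fin 0 → ℝ) (x : X) :
    semigrProd A u x = x := by
  simp [semigrProd]

lemma semigrProd_succ {n : ℕ} (A : Fin (n + 1) → GenOp X) (u : Fin (n + 1) → ℝ) (x : X) :
    semigrProd A u x = (A 0).T (u 0) (semigrProd (A ∘ Fin.succ) (u ∘ Fin.succ) x) := by
  simp only [semigrProd, List.ofFn_succ, List.prod_cons, ContinuousLinearMap.mul_apply]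
  rfl

lemma semigrProd_norm : ∀ (n : ℕ) (A : Fin n → GenOp X) (M : ℝ), 0 ≤ M →
    (∀ i (t : ℝ), 0 ≤ t → ‖(A i).T t‖ ≤ M) → ∀ (u : Fin n → ℝ), (∀ i, 0 ≤ u i) →
    ∀ x : X, ‖semigrProd A u x‖ ≤ M ^ n * ‖x‖ := by
  intro n
  induction n with
  | zero =>
    intro A M hM0 hMA u hu x
    simp [semigrProd_zero]
  | succ n ih =>
    intro A M hM0 hMA u hu x
    rw [semigrProd_succ]
    have h1 : ‖(A 0).T (u 0) (semigrProd (A ∘ Fin.succ) (u ∘ Fin.succ) x)‖ ≤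
        M * ‖semigrProd (A ∘ Fin.succ) (u ∘ Fin.succ) x‖ :=
      (((A 0).T (u 0)).le_opNorm _).trans
        (mul_le_mul_of_nonneg_right (hMA 0 (u 0) (hu 0)) (norm_nonneg _))
    have h2 := ih (A ∘ Fin.succ) M hM0 (fun i t ht => hMA i.succ t ht)
      (u ∘ Fin.succ) (fun i => hu i.succ) x
    calc ‖(A 0).T (u 0) (semigrProd (A ∘ Fin.succ) (u ∘ Fin.succ) x)‖
        ≤ M * ‖semigrProd (A ∘ Fin.succ) (u ∘ Fin.succ) x‖ := h1
      _ ≤ M * (M ^ n * ‖x‖) := mul_le_mul_of_nonneg_left h2 hM0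
      _ = M ^ (n + 1) * ‖x‖ := by ring

lemma prod_diff_bound : ∀ (n : ℕ) (A B : Fin n → GenOp X) (M : ℝ), 0 ≤ M →
    (∀ i (t : ℝ), 0 ≤ t → ‖(A i).T t‖ ≤ M) → (∀ i (t : ℝ), 0 ≤ t → ‖(B i).T t‖ ≤ M) →
    ∀ (d : Fin n → ℝ), (∀ i, 0 ≤ d i) →
    (∀ i (t : ℝ), 0 ≤ t → ∀ y : X, ‖(A i).T t y - (B i).T t y‖ ≤ M ^ 2 * d i * t * ‖y‖) →
    ∀ (u : Fin n → ℝ), (∀ i, 0 ≤ u i) → ∀ x : X,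
    ‖semigrProd A u x - semigrProd B u x‖ ≤ M ^ (n + 1) * (∑ i, d i * u i) * ‖x‖ := by
  intro n
  induction n with
  | zero =>
    intro A B M hM0 _ _ d _ _ u _ x
    simp [semigrProd_zero]
  | succ n ih =>
    intro A B M hM0 hMA hMB d hd hdiff u hu x
    set PA := semigrProd (A ∘ Fin.succ) (u ∘ Fin.succ) with hPA
    set PB := semigrProd (B ∘ Fin.succ) (u ∘ Fin.succ) with hPB
    have tri : ‖semigrProd A u x - semigrProd B u x‖ ≤
        ‖(A 0).T (u 0) (PA x) - (A 0).T (u 0) (PB x)‖ +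
        ‖(A 0).T (u 0) (PB x) - (B 0).T (u 0) (PB x)‖ := by
      rw [semigrProd_succ, semigrProd_succ]
      have := dist_triangle ((A 0).T (u 0) (PA x)) ((A 0).T (u 0) (PB x))
        ((B 0).T (u 0) (PB x))
      simpa [dist_eq_norm, hPA, hPB] using this
    have hterm1 : ‖(A 0).T (u 0) (PA x) - (A 0).T (u 0) (PB x)‖ ≤
        M * (M ^ (n + 1) * (∑ i : Fin n, d i.succ * u i.succ) * ‖x‖) := by
      have e : (A 0).T (u 0) (PA x) - (A 0).T (u 0) (PB x) =
          (A 0).T (u 0) (PA x - PB x) := by rw [map_sub]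
      rw [e]
      have h1 : ‖(A 0).T (u 0) (PA x - PB x)‖ ≤ M * ‖PA x - PB x‖ :=
        (((A 0).T (u 0)).le_opNorm _).trans
          (mul_le_mul_of_nonneg_right (hMA 0 (u 0) (hu 0)) (norm_nonneg _))
      have h2 := ih (A ∘ Fin.succ) (B ∘ Fin.succ) M hM0
        (fun i t ht => hMA i.succ t ht) (fun i t ht => hMB i.succ t ht)
        (d ∘ Fin.succ) (fun i => hd i.succ)
        (fun i t ht y => hdiff i.succ t ht y)
        (u ∘ Fin.succ) (fun i => hu i.succ) x
      exact h1.trans (mul_le_mul_of_nonneg_left h2 hM0)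
    have hPBx : ‖PB x‖ ≤ M ^ n * ‖x‖ :=
      semigrProd_norm n (B ∘ Fin.succ) M hM0 (fun i t ht => hMB i.succ t ht)
        (u ∘ Fin.succ) (fun i => hu i.succ) x
    have hterm2 : ‖(A 0).T (u 0) (PB x) - (B 0).T (u 0) (PB x)‖ ≤
        M ^ 2 * d 0 * u 0 * (M ^ n * ‖x‖) := by
      have h1 := hdiff 0 (u 0) (hu 0) (PB x)
      have hnn : 0 ≤ M ^ 2 * d 0 * u 0 :=
        mul_nonneg (mul_nonneg (pow_nonneg hM0 2) (hd 0)) (hu 0)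
      exact h1.trans (mul_le_mul_of_nonneg_left hPBx hnn)
    calc ‖semigrProd A u x - semigrProd B u x‖
        ≤ M * (M ^ (n + 1) * (∑ i : Fin n, d i.succ * u i.succ) * ‖x‖) +
          M ^ 2 * d 0 * u 0 * (M ^ n * ‖x‖) := tri.trans (add_le_add hterm1 hterm2)
      _ = M ^ (n + 1 + 1) * (d 0 * u 0 + ∑ i : Fin n, d i.succ * u i.succ) * ‖x‖ := by
          ring
      _ = M ^ (n + 1 + 1) * (∑ i : Fin (n + 1), d i * u i) * ‖x‖ := by
          rw [Fin.sum_univ_succ]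

lemma semigrProd_contOn : ∀ (n : ℕ) (A : Fin n → GenOp X) (M : ℝ),
    (∀ i (t : ℝ), 0 ≤ t → ‖(A i).T t‖ ≤ M) → ∀ x : X,
    ContinuousOn (fun u : Fin n → ℝ => semigrProd A u x) {u | ∀ i, 0 ≤ u i} := by
  intro n
  induction n with
  | zero =>
    intro A M hMA x
    have e : (fun u : Fin 0 → ℝ => semigrProd A u x) = fun _ => x :=
      funext fun u => semigrProd_zero A u x
    rw [e]
    exact continuousOn_const
  | succ n ih =>
    intro A M hMA x
    have hf := ih (A ∘ Fin.succ) M (fun i t ht => hMA i.succ t ht) x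
    have hjoint := (A 0).jointCont (hMA 0) hf
    have hφ : Continuous (fun u : Fin (n + 1) → ℝ => ((u 0, u ∘ Fin.succ) :
        ℝ × (Fin n → ℝ))) :=
      (continuous_apply 0).prodMk (continuous_pi fun i => continuous_apply i.succ)
    have hmap : MapsTo (fun u : Fin (n + 1) → ℝ => ((u 0, u ∘ Fin.succ) :
        ℝ × (Fin n → ℝ))) {u | ∀ i, 0 ≤ u i}
        (Set.Ici 0 ×ˢ {v : Fin n → ℝ | ∀ i, 0 ≤ v i}) :=
      fun u hu => ⟨hu 0, fun i => hu i.succ⟩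
    have := hjoint.comp hφ.continuousOn hmap
    refine this.congr fun u _ => ?_
    exact semigrProd_succ A u x

end Aux2

/-- **Corollary 2.** Let `ψ ∈ 𝒯ₙ` with `∂ψ/∂sᵢ|_{s=-0} = ∫ uᵢ dμ(u) ≠ ∞` for all `i`.
Then for commuting families `A`, `B` from `Gen(X)ⁿ` with `Aᵢ - Bᵢ` bounded (with bounded
extension `D i`) and `D(Aᵢ) = D(Bᵢ)`, one has
`‖ψ(A) - ψ(B)‖ ≤ M^{n+1} ∑ᵢ (∂ψ/∂sᵢ|_{s=-0}) ‖Aᵢ - Bᵢ‖`, where `M = max {M_A, M_B}`. -/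
theorem bernstein_operator_lipschitz {n : ℕ} (hn : 0 < n) (ρ : BernsteinMeasure n)
    (hderiv : ∀ i : Fin n, Integrable (fun u => u i) ρ.μ)
    (A B : Fin n → GenOp X)
    (hAcomm : ∀ i j, (A i).Commutes (A j)) (hBcomm : ∀ i j, (B i).Commutes (B j))
    (MA MB : ℝ)
    (hMA : ∀ i, ∀ t : ℝ, 0 ≤ t → ‖(A i).T t‖ ≤ MA)
    (hMB : ∀ i, ∀ t : ℝ, 0 ≤ t → ‖(B i).T t‖ ≤ MB)
    (hdom : ∀ i, (A i).dom = (B i).dom)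
    (hdense : ∀ i, Dense ((A i).dom : Set X))
    (D : Fin n → (X →L[ℂ] X))
    (hD : ∀ i, ∀ x ∈ (A i).dom, D i x = (A i).gen x - (B i).gen x) :
    ∃ S : X →L[ℂ] X,
      (∀ x ∈ ⨅ i, (A i).dom, S x = ∫ u, (semigrProd A u x - semigrProd B u x) ∂ρ.μ) ∧
      ‖S‖ ≤ (max MA MB) ^ (n + 1) * ∑ i, (∫ u, u i ∂ρ.μ) * ‖D i‖ := by
  classical
  set M : ℝ := max MA MB with hMdef
  have hM0 : 0 ≤ M :=
    (norm_nonneg ((A ⟨0, hn⟩).T 0)).trans ((hMA ⟨0, hn⟩ 0 le_rfl).trans (le_max_left _ _))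
  have hMA' : ∀ i (t : ℝ), 0 ≤ t → ‖(A i).T t‖ ≤ M :=
    fun i t ht => (hMA i t ht).trans (le_max_left _ _)
  have hMB' : ∀ i (t : ℝ), 0 ≤ t → ‖(B i).T t‖ ≤ M :=
    fun i t ht => (hMB i t ht).trans (le_max_right _ _)
  have hdiff : ∀ i (t : ℝ), 0 ≤ t → ∀ y : X,
      ‖(A i).T t y - (B i).T t y‖ ≤ M ^ 2 * ‖D i‖ * t * ‖y‖ :=
    fun i => duhamel (A i) (B i) M (hMA' i) (hMB' i) (hdom i) (hdense i) (D i) (hD i)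
  have hae : ∀ᵐ u ∂ρ.μ, ∀ i, 0 ≤ u i := by
    rw [Filter.eventually_iff, MeasureTheory.mem_ae_iff]
    refine measure_mono_null ?_ ρ.support
    intro u hu
    simp only [Set.mem_compl_iff, Set.mem_setOf_eq] at *
    tauto
  have hptw : ∀ (x : X) (u : Fin n → ℝ), (∀ i, 0 ≤ u i) →
      ‖semigrProd A u x - semigrProd B u x‖ ≤
        (M ^ (n + 1) * ‖x‖) * ∑ i, ‖D i‖ * u i := by
    intro x u hu
    have := prod_diff_bound n A B M hM0 hMA' hMB' (fun i => ‖D i‖)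
      (fun i => norm_nonneg _) hdiff u hu x
    calc ‖semigrProd A u x - semigrProd B u x‖
        ≤ M ^ (n + 1) * (∑ i, ‖D i‖ * u i) * ‖x‖ := this
      _ = (M ^ (n + 1) * ‖x‖) * ∑ i, ‖D i‖ * u i := by ring
  have hmeas : ∀ x : X,
      AEStronglyMeasurable (fun u => semigrProd A u x - semigrProd B u x) ρ.μ := by
    intro x
    set clamp : (Fin n → ℝ) → Fin n → ℝ := fun u i => max (u i) 0 with hclampdef
    have hclamp : Continuous clamp :=
      continuous_pi fun i => (continuous_apply i).max continuous_const
    have hQ : ∀ u, clamp u ∈ {v : Fin n → ℝ | ∀ i, 0 ≤ v i} := fun u i => le_max_right _ _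
    have hcA := semigrProd_contOn n A M hMA' x
    have hcB := semigrProd_contOn n B M hMB' x
    have h1 : Continuous (fun u => semigrProd A (clamp u) x) := by
      rw [← continuousOn_univ]
      exact hcA.comp hclamp.continuousOn (fun u _ => hQ u)
    have h2 : Continuous (fun u => semigrProd B (clamp u) x) := by
      rw [← continuousOn_univ]
      exact hcB.comp hclamp.continuousOn (fun u _ => hQ u)
    refine ((h1.sub h2).aestronglyMeasurable).congr ?_
    filter_upwards [hae] with u hu
    have : clamp u = u := funext fun i => max_eq_left (hu i)
    rw [Pi.sub_apply, this]
  have hsint : Integrable (fun u => ∑ i, ‖D i‖ * u i) ρ.μ :=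
    integrable_finset_sum _ (fun i _ => (hderiv i).const_mul _)
  have hint : ∀ x : X, Integrable (fun u => semigrProd A u x - semigrProd B u x) ρ.μ := by
    intro x
    refine (hsint.const_mul (M ^ (n + 1) * ‖x‖)).mono' (hmeas x) ?_
    filter_upwards [hae] with u hu
    exact hptw x u hu
  set Smap : X →ₗ[ℂ] X :=
    { toFun := fun x => ∫ u, (semigrProd A u x - semigrProd B u x) ∂ρ.μ
      map_add' := by
        intro x y
        show (∫ u, (semigrProd A u (x + y) - semigrProd B u (x + y)) ∂ρ.μ) =
          (∫ u, (semigrProd A u x - semigrProd B u x) ∂ρ.μ) +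
          ∫ u, (semigrProd A u y - semigrProd B u y) ∂ρ.μ
        rw [← integral_add (hint x) (hint y)]
        apply integral_congr_ae
        filter_upwards with u
        simp only [_root_.map_add]
        abel
      map_smul' := by
        intro c x
        show (∫ u, (semigrProd A u (c • x) - semigrProd B u (c • x)) ∂ρ.μ) =
          c • ∫ u, (semigrProd A u x - semigrProd B u x) ∂ρ.μ
        rw [← integral_smul]
        apply integral_congr_ae
        filter_upwards with u
        simp only [_root_.map_smul, smul_sub] } with hSmap
  set C0 : ℝ := M ^ (n + 1) * ∑ i, (∫ u, u i ∂ρ.μ) * ‖D i‖ with hC0def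
  have hii : ∀ i, 0 ≤ ∫ u, u i ∂ρ.μ := by
    intro i
    apply integral_nonneg_of_ae
    filter_upwards [hae] with u hu
    exact hu i
  have hC0 : 0 ≤ C0 :=
    mul_nonneg (pow_nonneg hM0 _)
      (Finset.sum_nonneg fun i _ => mul_nonneg (hii i) (norm_nonneg _))
  have hSbound : ∀ x : X, ‖Smap x‖ ≤ C0 * ‖x‖ := by
    intro x
    have h1 : ‖∫ u, (semigrProd A u x - semigrProd B u x) ∂ρ.μ‖ ≤
        ∫ u, (M ^ (n + 1) * ‖x‖) * (∑ i, ‖D i‖ * u i) ∂ρ.μ := by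
      refine norm_integral_le_of_norm_le (hsint.const_mul _) ?_
      filter_upwards [hae] with u hu
      exact hptw x u hu
    have h2 : ∫ u, (M ^ (n + 1) * ‖x‖) * (∑ i, ‖D i‖ * u i) ∂ρ.μ =
        (M ^ (n + 1) * ‖x‖) * ∑ i, ‖D i‖ * ∫ u, u i ∂ρ.μ := by
      rw [MeasureTheory.integral_const_mul]
      congr 1
      rw [MeasureTheory.integral_finset_sum _ (fun i _ => (hderiv i).const_mul _)]
      exact Finset.sum_congr rfl fun i _ => MeasureTheory.integral_const_mul _ _
    have h3 : (M ^ (n + 1) * ‖x‖) * ∑ i, ‖D i‖ * ∫ u, u i ∂ρ.μ = C0 * ‖x‖ := by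
      rw [hC0def]
      have : ∑ i, ‖D i‖ * ∫ u, u i ∂ρ.μ = ∑ i, (∫ u, u i ∂ρ.μ) * ‖D i‖ :=
        Finset.sum_congr rfl fun i _ => mul_comm _ _
      rw [this]
      ring
    calc ‖Smap x‖ = ‖∫ u, (semigrProd A u x - semigrProd B u x) ∂ρ.μ‖ := rfl
      _ ≤ ∫ u, (M ^ (n + 1) * ‖x‖) * (∑ i, ‖D i‖ * u i) ∂ρ.μ := h1
      _ = C0 * ‖x‖ := h2.trans h3
  refine ⟨Smap.mkContinuous C0 hSbound, fun x _ => rfl, ?_⟩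
  exact Smap.mkContinuous_norm_le hC0 hSbound
end
end

section
/- Let 𝓔 be a closed ideal of the algebra ℒ(X) of bounded operators on X which has the strong convex compactness property, and let ψ ∈ 𝒯ₙ. For every pair of commuting families A = (A₁,…,Aₙ) and B = (B₁,…,Bₙ) from Gen(X)ⁿ such that Aᵢ − Bᵢ ∈ 𝓔 and D(Aᵢ) = D(Bᵢ) for i = 1,…,n, the operator ψ(A) − ψ(B) belongs to 𝓔 as well. -/
open MeasureTheory Complex ContinuousLinearMap

set_option linter.unusedSectionVars false
set_option maxHeartbeats 1000000

noncomputable section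

variable {X : Type*} [NormedAddCommGroup X] [NormedSpace ℂ X] [CompleteSpace X]

/-- A closed (in the operator norm) two-sided ideal of the algebra `ℒ(X)`. -/
structure ClosedOperatorIdeal (X : Type*) [NormedAddCommGroup X] [NormedSpace ℂ X] where
  carrier : Set (X →L[ℂ] X)
  isClosed : IsClosed carrier
  zero_mem : (0 : X →L[ℂ] X) ∈ carrier
  add_mem : ∀ ⦃S R : X →L[ℂ] X⦄, S ∈ carrier → R ∈ carrier → S + R ∈ carrier
  smul_mem : ∀ (c : ℂ) ⦃S : X →L[ℂ] X⦄, S ∈ carrier → c • S ∈ carrier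
  comp_left_mem : ∀ (R : X →L[ℂ] X) ⦃S : X →L[ℂ] X⦄, S ∈ carrier → R.comp S ∈ carrier
  comp_right_mem : ∀ (R : X →L[ℂ] X) ⦃S : X →L[ℂ] X⦄, S ∈ carrier → S.comp R ∈ carrier

/-- A set `E ⊆ ℒ(X)` has the strong convex compactness property if for every finite
measure space `(Ω, μ)` and every strongly measurable, bounded function `U : Ω → ℒ(X)`
with values in `E`, the strong integral `∫ U dμ` belongs to `E`. -/
def HasSCCP {X : Type*} [NormedAddCommGroup X] [NormedSpace ℂ X]
    (E : Set (X →L[ℂ] X)) : Prop :=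
  ∀ (Ω : Type) (_ : MeasurableSpace Ω) (μ : Measure Ω), IsFiniteMeasure μ →
    ∀ U : Ω → X →L[ℂ] X, (∀ ω, U ω ∈ E) →
      (∀ x : X, AEStronglyMeasurable (fun ω => U ω x) μ) →
      (∃ C : ℝ, ∀ ω, ‖U ω‖ ≤ C) →
      ∀ S : X →L[ℂ] X, (∀ x : X, S x = ∫ ω, U ω x ∂μ) → S ∈ E

section AuxSemigroup

open Filter Set

/-- Joint continuity of `(t, x) ↦ T t x` along filters. -/
lemma GenOp.tendsto_T_apply (P : GenOp X) {M : ℝ} (hM : ∀ t : ℝ, 0 ≤ t → ‖P.T t‖ ≤ M)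
    {α : Type*} {l : Filter α} {τ : α → ℝ} {z : α → X} {t₀ : ℝ} {z₀ : X}
    (ht₀ : 0 ≤ t₀) (hτ : Tendsto τ l (nhds t₀)) (hτ0 : ∀ᶠ a in l, 0 ≤ τ a)
    (hz : Tendsto z l (nhds z₀)) :
    Tendsto (fun a => P.T (τ a) (z a)) l (nhds (P.T t₀ z₀)) := by
  rw [tendsto_iff_norm_sub_tendsto_zero]
  have hT : Tendsto (fun a => ‖P.T (τ a) z₀ - P.T t₀ z₀‖) l (nhds 0) := by
    have hcont : ContinuousWithinAt (fun t => P.T t z₀) (Set.Ici 0) t₀ :=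
      (P.strong_cont z₀) t₀ ht₀
    have hτ' : Tendsto τ l (nhdsWithin t₀ (Set.Ici 0)) :=
      tendsto_nhdsWithin_iff.2 ⟨hτ, by simpa using hτ0⟩
    exact tendsto_iff_norm_sub_tendsto_zero.1 (hcont.tendsto.comp hτ')
  have hz' : Tendsto (fun a => M * ‖z a - z₀‖) l (nhds 0) := by
    have := (tendsto_iff_norm_sub_tendsto_zero.1 hz).const_mul M
    simpa using this
  have h1 : Tendsto (fun a => M * ‖z a - z₀‖ + ‖P.T (τ a) z₀ - P.T t₀ z₀‖) l (nhds 0) := by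
    simpa using hz'.add hT
  refine squeeze_zero' (Eventually.of_forall fun a => norm_nonneg _) ?_ h1
  filter_upwards [hτ0] with a ha
  have h2 : ‖P.T (τ a) (z a) - P.T (τ a) z₀‖ ≤ M * ‖z a - z₀‖ := by
    rw [← map_sub]
    exact ((P.T (τ a)).le_opNorm _).trans
      (mul_le_mul_of_nonneg_right (hM _ ha) (norm_nonneg _))
  calc ‖P.T (τ a) (z a) - P.T t₀ z₀‖
      ≤ ‖P.T (τ a) (z a) - P.T (τ a) z₀‖ + ‖P.T (τ a) z₀ - P.T t₀ z₀‖ :=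
        norm_sub_le_norm_sub_add_norm_sub _ _ _
    _ ≤ M * ‖z a - z₀‖ + ‖P.T (τ a) z₀ - P.T t₀ z₀‖ := by gcongr

/-- Real-scalar version of `gen_spec`. -/
lemma GenOp.gen_tendsto (P : GenOp X) {y : X} (hy : y ∈ P.dom) :
    Tendsto (fun h : ℝ => h⁻¹ • (P.T h y - y)) (nhdsWithin 0 (Set.Ioi 0))
      (nhds (P.gen y)) := by
  refine (P.gen_spec y hy).congr fun h => ?_
  rw [← Complex.coe_smul, Complex.ofReal_inv]

/-- The domain is invariant under the semigroup and the generator commutes with it. -/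
lemma GenOp.T_mem_dom_s6 (P : GenOp X) {y : X} (hy : y ∈ P.dom) {t : ℝ} (ht : 0 ≤ t) :
    P.T t y ∈ P.dom ∧ P.gen (P.T t y) = P.T t (P.gen y) := by
  have key : Tendsto (fun h : ℝ => (h : ℂ)⁻¹ • (P.T h (P.T t y) - P.T t y))
      (nhdsWithin 0 (Set.Ioi 0)) (nhds (P.T t (P.gen y))) := by
    have h1 : Tendsto (fun h : ℝ => P.T t ((h : ℂ)⁻¹ • (P.T h y - y)))
        (nhdsWithin 0 (Set.Ioi 0)) (nhds (P.T t (P.gen y))) :=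
      ((P.T t).continuous.tendsto _).comp (P.gen_spec y hy)
    refine h1.congr' ?_
    filter_upwards [self_mem_nhdsWithin] with h hh
    have hh0 : (0 : ℝ) ≤ h := le_of_lt hh
    have hcomm : P.T t (P.T h y) = P.T h (P.T t y) := by
      have e1 := congrArg (fun f : X →L[ℂ] X => f y) (P.T_add ht hh0)
      have e2 := congrArg (fun f : X →L[ℂ] X => f y) (P.T_add hh0 ht)
      simp only [ContinuousLinearMap.comp_apply] at e1 e2
      rw [← e1, ← e2, add_comm]
    rw [_root_.map_smul, map_sub, hcomm]
  have hmem : P.T t y ∈ P.dom := (P.mem_dom_iff _).2 ⟨_, key⟩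
  exact ⟨hmem, tendsto_nhds_unique (P.gen_spec _ hmem) key⟩

/-- Continuity of `s ↦ P.T (t - s) (Dd (Q.T s x))` on `[0, t]`. -/
lemma vop_integrand_cont (P Q : GenOp X) {MP : ℝ}
    (hMP : ∀ t : ℝ, 0 ≤ t → ‖P.T t‖ ≤ MP) (Dd : X →L[ℂ] X) {t : ℝ} (x : X) :
    ContinuousOn (fun s => P.T (t - s) (Dd (Q.T s x))) (Set.Icc 0 t) := by
  intro s₀ hs₀
  have hτ : Tendsto (fun s : ℝ => t - s) (nhdsWithin s₀ (Set.Icc 0 t)) (nhds (t - s₀)) :=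
    ((continuous_const.sub continuous_id).tendsto s₀).mono_left nhdsWithin_le_nhds
  have hτ0 : ∀ᶠ s in nhdsWithin s₀ (Set.Icc 0 t), 0 ≤ t - s := by
    filter_upwards [self_mem_nhdsWithin] with s hs
    exact sub_nonneg.2 hs.2
  have hz : Tendsto (fun s : ℝ => Dd (Q.T s x)) (nhdsWithin s₀ (Set.Icc 0 t))
      (nhds (Dd (Q.T s₀ x))) := by
    have hQ : Tendsto (fun s : ℝ => Q.T s x) (nhdsWithin s₀ (Set.Icc 0 t))
        (nhds (Q.T s₀ x)) :=
      ((Q.strong_cont x) s₀ hs₀.1).mono (Set.Icc_subset_Ici_self)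
    exact (Dd.continuous.tendsto _).comp hQ
  exact P.tendsto_T_apply hMP (sub_nonneg.2 hs₀.2) hτ hτ0 hz

/-- Variation of parameters formula on the common domain. -/
lemma vop_dom (P Q : GenOp X) {MP MQ : ℝ}
    (hMP : ∀ t : ℝ, 0 ≤ t → ‖P.T t‖ ≤ MP) (hMQ : ∀ t : ℝ, 0 ≤ t → ‖Q.T t‖ ≤ MQ)
    (hdomPQ : P.dom = Q.dom) (Dd : X →L[ℂ] X)
    (hDd : ∀ y ∈ P.dom, Dd y = P.gen y - Q.gen y)
    {t : ℝ} (ht : 0 ≤ t) {x : X} (hx : x ∈ P.dom) :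
    P.T t x - Q.T t x = ∫ s in (0:ℝ)..t, P.T (t - s) (Dd (Q.T s x)) := by
  set f : ℝ → X := fun s => P.T (t - s) (Q.T s x) with hf
  have hxQ : x ∈ Q.dom := hdomPQ ▸ hx
  -- continuity of f on [0, t]
  have hcont : ContinuousOn f (Set.Icc 0 t) := by
    intro s₀ hs₀
    have hτ : Tendsto (fun s : ℝ => t - s) (nhdsWithin s₀ (Set.Icc 0 t)) (nhds (t - s₀)) :=
      ((continuous_const.sub continuous_id).tendsto s₀).mono_left nhdsWithin_le_nhds
    have hτ0 : ∀ᶠ s in nhdsWithin s₀ (Set.Icc 0 t), 0 ≤ t - s := by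
      filter_upwards [self_mem_nhdsWithin] with s hs
      exact sub_nonneg.2 hs.2
    have hz : Tendsto (fun s : ℝ => Q.T s x) (nhdsWithin s₀ (Set.Icc 0 t))
        (nhds (Q.T s₀ x)) :=
      ((Q.strong_cont x) s₀ hs₀.1).mono (Set.Icc_subset_Ici_self)
    exact P.tendsto_T_apply hMP (sub_nonneg.2 hs₀.2) hτ hτ0 hz
  -- the right derivative of f
  have hderiv : ∀ s ∈ Set.Ioo 0 t,
      HasDerivWithinAt f (-(P.T (t - s) (Dd (Q.T s x)))) (Set.Ioi s) s := by
    intro s hs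
    obtain ⟨hs0, hst⟩ := hs
    set y : X := Q.T s x with hy
    have hymemQ : y ∈ Q.dom := (Q.T_mem_dom_s6 hxQ hs0.le).1
    have hymemP : y ∈ P.dom := hdomPQ ▸ hymemQ
    rw [hasDerivWithinAt_iff_tendsto_slope' (notMem_Ioi_self)]
    have hIoo : Set.Ioo s t ∈ nhdsWithin s (Set.Ioi s) :=
      Ioo_mem_nhdsGT_of_mem ⟨le_refl s, hst⟩
    -- auxiliary limit: v - s → 0 within Ioi 0
    have hvs : Tendsto (fun v : ℝ => v - s) (nhdsWithin s (Set.Ioi s))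
        (nhdsWithin 0 (Set.Ioi 0)) := by
      refine tendsto_nhdsWithin_iff.2 ⟨?_, ?_⟩
      · have h0 : Tendsto (fun v : ℝ => v - s) (nhds s) (nhds (s - s)) :=
          (continuous_id.sub continuous_const).tendsto s
        rw [sub_self] at h0
        exact h0.mono_left nhdsWithin_le_nhds
      · filter_upwards [self_mem_nhdsWithin] with v hv
        exact Set.mem_Ioi.2 (sub_pos.2 hv)
    have htv : Tendsto (fun v : ℝ => t - v) (nhdsWithin s (Set.Ioi s)) (nhds (t - s)) :=
      ((continuous_const.sub continuous_id).tendsto s).mono_left nhdsWithin_le_nhds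
    have htv0 : ∀ᶠ v in nhdsWithin s (Set.Ioi s), 0 ≤ t - v := by
      filter_upwards [hIoo] with v hv
      exact sub_nonneg.2 hv.2.le
    have termQ : Tendsto (fun v : ℝ => P.T (t - v) ((v - s)⁻¹ • (Q.T (v - s) y - y)))
        (nhdsWithin s (Set.Ioi s)) (nhds (P.T (t - s) (Q.gen y))) :=
      P.tendsto_T_apply hMP (sub_nonneg.2 hst.le) htv htv0 ((Q.gen_tendsto hymemQ).comp hvs)
    have termP : Tendsto (fun v : ℝ => P.T (t - v) ((v - s)⁻¹ • (P.T (v - s) y - y)))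
        (nhdsWithin s (Set.Ioi s)) (nhds (P.T (t - s) (P.gen y))) :=
      P.tendsto_T_apply hMP (sub_nonneg.2 hst.le) htv htv0 ((P.gen_tendsto hymemP).comp hvs)
    have hlim := termQ.sub termP
    have hval : P.T (t - s) (Q.gen y) - P.T (t - s) (P.gen y) = -(P.T (t - s) (Dd y)) := by
      rw [hDd y hymemP, map_sub]
      abel
    rw [hval] at hlim
    refine hlim.congr' ?_
    filter_upwards [hIoo] with v hv
    obtain ⟨hsv, hvt⟩ := hv
    have hvs0 : (0 : ℝ) ≤ v - s := sub_nonneg.2 hsv.le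
    have h1 : Q.T v x = Q.T (v - s) y := by
      have e := congrArg (fun g : X →L[ℂ] X => g x) (Q.T_add hvs0 hs0.le)
      simp only [ContinuousLinearMap.comp_apply] at e
      rw [hy, ← e, sub_add_cancel]
    have h2 : P.T (t - s) y = P.T (t - v) (P.T (v - s) y) := by
      have e := congrArg (fun g : X →L[ℂ] X => g y) (P.T_add (sub_nonneg.2 hvt.le) hvs0)
      simp only [ContinuousLinearMap.comp_apply] at e
      rw [← e]
      norm_num
    have key : f v - f s = P.T (t - v) (Q.T (v - s) y - y) - P.T (t - v) (P.T (v - s) y - y) := by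
      simp only [hf, map_sub]
      rw [← h1, h2]
      abel
    show P.T (t - v) ((v - s)⁻¹ • (Q.T (v - s) y - y))
        - P.T (t - v) ((v - s)⁻¹ • (P.T (v - s) y - y)) = slope f s v
    simp only [slope_def_module, key, map_sub, smul_sub,
      ContinuousLinearMap.map_smul_of_tower]
  -- interval integrability of the derivative
  have hint : IntervalIntegrable (fun s => -(P.T (t - s) (Dd (Q.T s x)))) volume 0 t := by
    have := (vop_integrand_cont P Q hMP Dd x (t := t)).neg
    rw [← Set.uIcc_of_le ht] at this
    exact this.intervalIntegrable
  have hFTC := intervalIntegral.integral_eq_sub_of_hasDeriv_right_of_le ht hcont hderiv hint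
  have hft : f t = Q.T t x := by
    simp only [hf, sub_self, P.T_zero, ContinuousLinearMap.one_apply]
  have hf0 : f 0 = P.T t x := by
    have e := congrArg (fun g : X →L[ℂ] X => g x) (Q.T_zero)
    simp only [hf, sub_zero, Q.T_zero, ContinuousLinearMap.one_apply]
  rw [intervalIntegral.integral_neg, hft, hf0] at hFTC
  rw [← neg_eq_iff_eq_neg.2 hFTC.symm]
  abel

/-- Variation of parameters formula, extended by density to all of `X`. -/
lemma vop_all (P Q : GenOp X) {MP MQ : ℝ}
    (hMP : ∀ t : ℝ, 0 ≤ t → ‖P.T t‖ ≤ MP) (hMQ : ∀ t : ℝ, 0 ≤ t → ‖Q.T t‖ ≤ MQ)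
    (hdomPQ : P.dom = Q.dom) (hdense : Dense (P.dom : Set X)) (Dd : X →L[ℂ] X)
    (hDd : ∀ y ∈ P.dom, Dd y = P.gen y - Q.gen y)
    {t : ℝ} (ht : 0 ≤ t) (x : X) :
    P.T t x - Q.T t x = ∫ s in (0:ℝ)..t, P.T (t - s) (Dd (Q.T s x)) := by
  have hMP0 : 0 ≤ MP := le_trans (norm_nonneg _) (hMP 0 le_rfl)
  have hMQ0 : 0 ≤ MQ := le_trans (norm_nonneg _) (hMQ 0 le_rfl)
  have hib : ∀ x : X, IntervalIntegrable (fun s => P.T (t - s) (Dd (Q.T s x))) volume 0 t := by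
    intro x
    have := vop_integrand_cont P Q hMP Dd x (t := t)
    rw [← Set.uIcc_of_le ht] at this
    exact this.intervalIntegrable
  set g₂ : X → X := fun x => ∫ s in (0:ℝ)..t, P.T (t - s) (Dd (Q.T s x)) with hg₂
  have hcont₂ : Continuous g₂ := by
    rw [Metric.continuous_iff]
    intro x ε hε
    by_cases hC : MP * ‖Dd‖ * MQ * t = 0
    · refine ⟨1, one_pos, fun x' _ => ?_⟩
      have : g₂ x' - g₂ x = ∫ s in (0:ℝ)..t, P.T (t - s) (Dd (Q.T s (x' - x))) := by
        rw [← intervalIntegral.integral_sub (hib x') (hib x)]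
        congr 1; funext s
        simp only [map_sub]
      have hb : ‖g₂ x' - g₂ x‖ ≤ (MP * ‖Dd‖ * (MQ * ‖x' - x‖)) * |t - 0| := by
        rw [this]
        refine intervalIntegral.norm_integral_le_of_norm_le_const fun s hs => ?_
        rw [Set.uIoc_of_le ht] at hs
        calc ‖P.T (t - s) (Dd (Q.T s (x' - x)))‖
            ≤ MP * ‖Dd (Q.T s (x' - x))‖ := by
              refine ((P.T (t - s)).le_opNorm _).trans ?_
              exact mul_le_mul_of_nonneg_right (hMP _ (sub_nonneg.2 hs.2)) (norm_nonneg _)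
          _ ≤ MP * (‖Dd‖ * ‖Q.T s (x' - x)‖) := by
              refine mul_le_mul_of_nonneg_left ((Dd).le_opNorm _) hMP0
          _ ≤ MP * (‖Dd‖ * (MQ * ‖x' - x‖)) := by
              refine mul_le_mul_of_nonneg_left (mul_le_mul_of_nonneg_left ?_ (norm_nonneg _)) hMP0
              exact ((Q.T s).le_opNorm _).trans
                (mul_le_mul_of_nonneg_right (hMQ _ hs.1.le) (norm_nonneg _))
          _ = MP * ‖Dd‖ * (MQ * ‖x' - x‖) := by ring
        
      rw [dist_eq_norm]
      have : ‖g₂ x' - g₂ x‖ ≤ 0 := by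
        refine hb.trans (le_of_eq ?_)
        rw [sub_zero, _root_.abs_of_nonneg ht]
        nlinarith [norm_nonneg (x' - x)]
      have h0 : ‖g₂ x' - g₂ x‖ = 0 := le_antisymm this (norm_nonneg _)
      rw [h0]; exact hε
    · have hCpos : 0 < MP * ‖Dd‖ * MQ * t := by
        rcases lt_or_eq_of_le (by positivity : (0:ℝ) ≤ MP * ‖Dd‖ * MQ * t) with h | h
        · exact h
        · exact absurd h.symm hC
      refine ⟨ε / (MP * ‖Dd‖ * MQ * t), by positivity, fun x' hx' => ?_⟩
      have : g₂ x' - g₂ x = ∫ s in (0:ℝ)..t, P.T (t - s) (Dd (Q.T s (x' - x))) := by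
        rw [← intervalIntegral.integral_sub (hib x') (hib x)]
        congr 1; funext s
        simp only [map_sub]
      have hb : ‖g₂ x' - g₂ x‖ ≤ (MP * ‖Dd‖ * (MQ * ‖x' - x‖)) * |t - 0| := by
        rw [this]
        refine intervalIntegral.norm_integral_le_of_norm_le_const fun s hs => ?_
        rw [Set.uIoc_of_le ht] at hs
        calc ‖P.T (t - s) (Dd (Q.T s (x' - x)))‖
            ≤ MP * ‖Dd (Q.T s (x' - x))‖ := by
              refine ((P.T (t - s)).le_opNorm _).trans ?_
              exact mul_le_mul_of_nonneg_right (hMP _ (sub_nonneg.2 hs.2)) (norm_nonneg _)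
          _ ≤ MP * (‖Dd‖ * ‖Q.T s (x' - x)‖) := by
              refine mul_le_mul_of_nonneg_left ((Dd).le_opNorm _) hMP0
          _ ≤ MP * (‖Dd‖ * (MQ * ‖x' - x‖)) := by
              refine mul_le_mul_of_nonneg_left (mul_le_mul_of_nonneg_left ?_ (norm_nonneg _)) hMP0
              exact ((Q.T s).le_opNorm _).trans
                (mul_le_mul_of_nonneg_right (hMQ _ hs.1.le) (norm_nonneg _))
          _ = MP * ‖Dd‖ * (MQ * ‖x' - x‖) := by ring
      rw [dist_eq_norm]
      calc ‖g₂ x' - g₂ x‖ ≤ (MP * ‖Dd‖ * (MQ * ‖x' - x‖)) * |t - 0| := hb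
        _ = (MP * ‖Dd‖ * MQ * t) * ‖x' - x‖ := by
            rw [sub_zero, _root_.abs_of_nonneg ht]; ring
        _ = (MP * ‖Dd‖ * MQ * t) * dist x' x := by rw [dist_eq_norm]
        _ < (MP * ‖Dd‖ * MQ * t) * (ε / (MP * ‖Dd‖ * MQ * t)) := by
            exact mul_lt_mul_of_pos_left hx' hCpos
        _ = ε := by rw [← mul_div_assoc, mul_div_cancel_left₀ _ hCpos.ne']
  have hcont₁ : Continuous fun x => P.T t x - Q.T t x :=
    ((P.T t).continuous.sub (Q.T t).continuous)
  have heq : (fun x => P.T t x - Q.T t x) = g₂ := by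
    refine Continuous.ext_on hdense hcont₁ hcont₂ ?_
    intro x hx
    exact vop_dom P Q hMP hMQ hdomPQ Dd hDd ht hx
  exact congrFun heq x

/-- Operator norm bound from the variation of parameters formula. -/
lemma T_sub_norm (P Q : GenOp X) {MP MQ : ℝ}
    (hMP : ∀ t : ℝ, 0 ≤ t → ‖P.T t‖ ≤ MP) (hMQ : ∀ t : ℝ, 0 ≤ t → ‖Q.T t‖ ≤ MQ)
    (hdomPQ : P.dom = Q.dom) (hdense : Dense (P.dom : Set X)) (Dd : X →L[ℂ] X)
    (hDd : ∀ y ∈ P.dom, Dd y = P.gen y - Q.gen y)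
    {t : ℝ} (ht : 0 ≤ t) :
    ‖P.T t - Q.T t‖ ≤ MP * ‖Dd‖ * MQ * t := by
  have hMP0 : 0 ≤ MP := le_trans (norm_nonneg _) (hMP 0 le_rfl)
  have hMQ0 : 0 ≤ MQ := le_trans (norm_nonneg _) (hMQ 0 le_rfl)
  refine ContinuousLinearMap.opNorm_le_bound _ (by positivity) fun x => ?_
  have h1 : (P.T t - Q.T t) x = P.T t x - Q.T t x := rfl
  rw [h1, vop_all P Q hMP hMQ hdomPQ hdense Dd hDd ht x]
  have hb : ‖∫ s in (0:ℝ)..t, P.T (t - s) (Dd (Q.T s x))‖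
      ≤ (MP * ‖Dd‖ * (MQ * ‖x‖)) * |t - 0| := by
    refine intervalIntegral.norm_integral_le_of_norm_le_const fun s hs => ?_
    rw [Set.uIoc_of_le ht] at hs
    calc ‖P.T (t - s) (Dd (Q.T s x))‖
        ≤ MP * ‖Dd (Q.T s x)‖ := by
          refine ((P.T (t - s)).le_opNorm _).trans ?_
          exact mul_le_mul_of_nonneg_right (hMP _ (sub_nonneg.2 hs.2)) (norm_nonneg _)
      _ ≤ MP * (‖Dd‖ * ‖Q.T s x‖) :=
          mul_le_mul_of_nonneg_left ((Dd).le_opNorm _) hMP0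
      _ ≤ MP * (‖Dd‖ * (MQ * ‖x‖)) := by
          refine mul_le_mul_of_nonneg_left (mul_le_mul_of_nonneg_left ?_ (norm_nonneg _)) hMP0
          exact ((Q.T s).le_opNorm _).trans
            (mul_le_mul_of_nonneg_right (hMQ _ hs.1.le) (norm_nonneg _))
      _ = MP * ‖Dd‖ * (MQ * ‖x‖) := by ring
  refine hb.trans (le_of_eq ?_)
  rw [sub_zero, _root_.abs_of_nonneg ht]; ring

/-- The difference of the two semigroups at a fixed time belongs to the ideal. -/
lemma T_sub_mem (E : ClosedOperatorIdeal X) (hE : HasSCCP E.carrier)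
    (P Q : GenOp X) {MP MQ : ℝ}
    (hMP : ∀ t : ℝ, 0 ≤ t → ‖P.T t‖ ≤ MP) (hMQ : ∀ t : ℝ, 0 ≤ t → ‖Q.T t‖ ≤ MQ)
    (hdomPQ : P.dom = Q.dom) (hdense : Dense (P.dom : Set X)) (Dd : X →L[ℂ] X)
    (hDd : ∀ y ∈ P.dom, Dd y = P.gen y - Q.gen y) (hDdE : Dd ∈ E.carrier)
    {t : ℝ} (ht : 0 ≤ t) :
    P.T t - Q.T t ∈ E.carrier := by
  classical
  have hMP0 : 0 ≤ MP := le_trans (norm_nonneg _) (hMP 0 le_rfl)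
  have hMQ0 : 0 ≤ MQ := le_trans (norm_nonneg _) (hMQ 0 le_rfl)
  set U : ℝ → X →L[ℂ] X := fun s =>
    if 0 ≤ s ∧ s ≤ t then ((P.T (t - s)).comp (Dd.comp (Q.T s))) else 0 with hU
  have hUE : ∀ s, U s ∈ E.carrier := by
    intro s
    by_cases h : 0 ≤ s ∧ s ≤ t
    · simpa [hU, h] using E.comp_left_mem (P.T (t - s)) (E.comp_right_mem (Q.T s) hDdE)
    · simpa [hU, h] using E.zero_mem
  set ν : Measure ℝ := volume.restrict (Set.Ioc 0 t) with hν
  have hfin : IsFiniteMeasure ν := by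
    constructor
    rw [hν, Measure.restrict_apply_univ, Real.volume_Ioc]
    exact ENNReal.ofReal_lt_top
  have hmeas : ∀ x : X, AEStronglyMeasurable (fun s => U s x) ν := by
    intro x
    have hc : ContinuousOn (fun s => P.T (t - s) (Dd (Q.T s x))) (Set.Icc 0 t) :=
      vop_integrand_cont P Q hMP Dd x
    have h1 : AEStronglyMeasurable (fun s => P.T (t - s) (Dd (Q.T s x)))
        (volume.restrict (Set.Icc 0 t)) :=
      hc.aestronglyMeasurable measurableSet_Icc
    have h2 : AEStronglyMeasurable (fun s => P.T (t - s) (Dd (Q.T s x))) ν :=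
      h1.mono_measure (Measure.restrict_mono Set.Ioc_subset_Icc_self le_rfl)
    refine h2.congr ?_
    filter_upwards [ae_restrict_mem measurableSet_Ioc] with s hs
    have h : 0 ≤ s ∧ s ≤ t := ⟨hs.1.le, hs.2⟩
    simp [hU, h]
  have hbound : ∃ C : ℝ, ∀ s, ‖U s‖ ≤ C := by
    refine ⟨MP * ‖Dd‖ * MQ, fun s => ?_⟩
    by_cases h : 0 ≤ s ∧ s ≤ t
    · simp only [hU, if_pos h]
      calc ‖(P.T (t - s)).comp (Dd.comp (Q.T s))‖
          ≤ ‖P.T (t - s)‖ * ‖Dd.comp (Q.T s)‖ := ContinuousLinearMap.opNorm_comp_le _ _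
        _ ≤ MP * (‖Dd‖ * MQ) := by
            refine mul_le_mul (hMP _ (sub_nonneg.2 h.2)) ?_ (norm_nonneg _) hMP0
            exact (ContinuousLinearMap.opNorm_comp_le _ _).trans
              (mul_le_mul_of_nonneg_left (hMQ _ h.1) (norm_nonneg _))
        _ = MP * ‖Dd‖ * MQ := by ring
    · simp only [hU, if_neg h, norm_zero]
      positivity
  refine hE ℝ _ ν hfin U hUE hmeas hbound _ fun x => ?_
  have h1 : (P.T t - Q.T t) x = P.T t x - Q.T t x := rfl
  rw [h1, vop_all P Q hMP hMQ hdomPQ hdense Dd hDd ht x,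
    intervalIntegral.integral_of_le ht]
  refine integral_congr_ae ?_
  filter_upwards [ae_restrict_mem measurableSet_Ioc] with s hs
  have h : 0 ≤ s ∧ s ≤ t := ⟨hs.1.le, hs.2⟩
  simp [hU, h]

end AuxSemigroup

section AuxList

lemma list_forall₂_ofFn {α β : Type*} {R : α → β → Prop} :
    ∀ {n : ℕ} {f : Fin n → α} {g : Fin n → β}, (∀ i, R (f i) (g i)) →
      List.Forall₂ R (List.ofFn f) (List.ofFn g)
  | 0, _, _, _ => by simp
  | n + 1, f, g, h => by
    rw [List.ofFn_succ, List.ofFn_succ]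
    exact List.Forall₂.cons (h 0) (list_forall₂_ofFn fun i => h i.succ)

lemma list_zipWith_ofFn {α β γ : Type*} (F : α → β → γ) :
    ∀ {n : ℕ} (f : Fin n → α) (g : Fin n → β),
      List.zipWith F (List.ofFn f) (List.ofFn g) = List.ofFn fun i => F (f i) (g i)
  | 0, _, _ => by simp
  | n + 1, f, g => by
    rw [List.ofFn_succ, List.ofFn_succ, List.ofFn_succ (f := fun i => F (f i) (g i)),
      List.zipWith_cons_cons, list_zipWith_ofFn F _ _]

lemma list_prod_norm_le {C : ℝ} (hC : 1 ≤ C) :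
    ∀ (L : List (X →L[ℂ] X)), (∀ a ∈ L, ‖a‖ ≤ C) → ‖L.prod‖ ≤ C ^ L.length
  | [], _ => by
    rw [List.prod_nil, List.length_nil, pow_zero, ContinuousLinearMap.one_def]
    exact ContinuousLinearMap.norm_id_le
  | a :: L, h => by
    rw [List.prod_cons, List.length_cons]
    calc ‖a * L.prod‖ ≤ ‖a‖ * ‖L.prod‖ := norm_mul_le _ _
      _ ≤ C * C ^ L.length :=
          mul_le_mul (h a List.mem_cons_self)
            (list_prod_norm_le hC L fun b hb => h b (List.mem_cons_of_mem _ hb))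
            (norm_nonneg _) (le_trans zero_le_one hC)
      _ = C ^ (L.length + 1) := by ring

lemma list_prod_sub_mem (E : ClosedOperatorIdeal X) {L M : List (X →L[ℂ] X)}
    (h : List.Forall₂ (fun a b => a - b ∈ E.carrier) L M) :
    L.prod - M.prod ∈ E.carrier := by
  induction h with
  | nil => simpa using E.zero_mem
  | @cons a b L' M' hab hLM ih =>
    rw [List.prod_cons, List.prod_cons]
    have key : a * L'.prod - b * M'.prod = a * (L'.prod - M'.prod) + (a - b) * M'.prod := by
      rw [mul_sub, sub_mul]; abel
    rw [key]
    exact E.add_mem (E.comp_left_mem a ih) (E.comp_right_mem M'.prod hab)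

lemma list_zip_norm_sum_nonneg :
    ∀ (L M : List (X →L[ℂ] X)),
      0 ≤ (List.zipWith (fun a b : X →L[ℂ] X => ‖a - b‖) L M).sum
  | [], _ => by simp
  | _ :: _, [] => by simp
  | a :: L, b :: M => by
    rw [List.zipWith_cons_cons, List.sum_cons]
    have := list_zip_norm_sum_nonneg L M
    positivity

lemma list_prod_sub_norm {C₁ C₂ : ℝ} (h₁ : 1 ≤ C₁) (h₂ : 1 ≤ C₂) :
    ∀ (L M : List (X →L[ℂ] X)), L.length = M.length →
      (∀ a ∈ L, ‖a‖ ≤ C₁) → (∀ b ∈ M, ‖b‖ ≤ C₂) →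
      ‖L.prod - M.prod‖ ≤ C₁ ^ L.length * C₂ ^ L.length *
        (List.zipWith (fun a b : X →L[ℂ] X => ‖a - b‖) L M).sum
  | [], [], _, _, _ => by simp
  | [], b :: M, h, _, _ => by simp at h
  | a :: L, [], h, _, _ => by simp at h
  | a :: L, b :: M, h, hL, hM => by
    have hlen : L.length = M.length := by simpa using h
    have ih := list_prod_sub_norm h₁ h₂ L M hlen
      (fun y hy => hL y (List.mem_cons_of_mem _ hy))
      (fun y hy => hM y (List.mem_cons_of_mem _ hy))
    have hMprod : ‖M.prod‖ ≤ C₂ ^ L.length := by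
      rw [hlen]
      exact list_prod_norm_le h₂ M fun y hy => hM y (List.mem_cons_of_mem _ hy)
    rw [List.prod_cons, List.prod_cons, List.zipWith_cons_cons, List.length_cons, List.sum_cons]
    have key : a * L.prod - b * M.prod = a * (L.prod - M.prod) + (a - b) * M.prod := by
      rw [mul_sub, sub_mul]; abel
    rw [key]
    set Ssum : ℝ := (List.zipWith (fun a b : X →L[ℂ] X => ‖a - b‖) L M).sum with hSsum
    have hSnn : 0 ≤ Ssum := list_zip_norm_sum_nonneg L M
    have t1 : ‖a * (L.prod - M.prod)‖ ≤ C₁ * (C₁ ^ L.length * C₂ ^ L.length * Ssum) := by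
      refine (norm_mul_le _ _).trans ?_
      exact mul_le_mul (hL a List.mem_cons_self) ih (norm_nonneg _)
        (le_trans zero_le_one h₁)
    have t2 : ‖(a - b) * M.prod‖ ≤ ‖a - b‖ * C₂ ^ L.length := by
      refine (norm_mul_le _ _).trans ?_
      exact mul_le_mul_of_nonneg_left hMprod (norm_nonneg _)
    refine (norm_add_le _ _).trans ((add_le_add t1 t2).trans ?_)
    have hab : (0:ℝ) ≤ ‖a - b‖ := norm_nonneg _
    have hp1 : (1:ℝ) ≤ C₁ ^ L.length := one_le_pow₀ h₁
    have hp2 : (1:ℝ) ≤ C₂ ^ L.length := one_le_pow₀ h₂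
    have e1 : C₁ ^ (L.length + 1) = C₁ * C₁ ^ L.length := by ring
    have e2 : C₂ ^ (L.length + 1) = C₂ * C₂ ^ L.length := by ring
    rw [e1, e2]
    have c10 : (0:ℝ) ≤ C₁ := le_trans zero_le_one h₁
    have c20 : (0:ℝ) ≤ C₂ := le_trans zero_le_one h₂
    have p10 : (0:ℝ) ≤ C₁ ^ L.length := le_trans zero_le_one hp1
    have p20 : (0:ℝ) ≤ C₂ ^ L.length := le_trans zero_le_one hp2
    have m1 : (1:ℝ) ≤ C₁ * C₁ ^ L.length := by
      calc (1:ℝ) = 1 * 1 := by ring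
        _ ≤ C₁ * C₁ ^ L.length := mul_le_mul h₁ hp1 zero_le_one c10
    have m2 : (1:ℝ) ≤ C₁ * C₁ ^ L.length * C₂ := by
      calc (1:ℝ) = 1 * 1 := by ring
        _ ≤ (C₁ * C₁ ^ L.length) * C₂ := mul_le_mul m1 h₂ zero_le_one (by positivity)
    have k1 : C₁ * (C₁ ^ L.length * C₂ ^ L.length * Ssum)
        ≤ C₁ * C₁ ^ L.length * (C₂ * C₂ ^ L.length) * Ssum := by
      have hx : C₁ * C₁ ^ L.length * C₂ ^ L.length
          ≤ C₁ * C₁ ^ L.length * (C₂ * C₂ ^ L.length) := by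
        rw [show C₁ * C₁ ^ L.length * (C₂ * C₂ ^ L.length)
            = (C₁ * C₁ ^ L.length * C₂ ^ L.length) * C₂ by ring]
        exact le_mul_of_one_le_right (by positivity) h₂
      calc C₁ * (C₁ ^ L.length * C₂ ^ L.length * Ssum)
          = (C₁ * C₁ ^ L.length * C₂ ^ L.length) * Ssum := by ring
        _ ≤ (C₁ * C₁ ^ L.length * (C₂ * C₂ ^ L.length)) * Ssum :=
            mul_le_mul_of_nonneg_right hx hSnn
    have k2 : ‖a - b‖ * C₂ ^ L.length
        ≤ C₁ * C₁ ^ L.length * (C₂ * C₂ ^ L.length) * ‖a - b‖ := by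
      have h1' : (1:ℝ) * C₂ ^ L.length ≤ (C₁ * C₁ ^ L.length * C₂) * C₂ ^ L.length :=
        mul_le_mul_of_nonneg_right m2 p20
      calc ‖a - b‖ * C₂ ^ L.length = (1 * C₂ ^ L.length) * ‖a - b‖ := by ring
        _ ≤ ((C₁ * C₁ ^ L.length * C₂) * C₂ ^ L.length) * ‖a - b‖ :=
            mul_le_mul_of_nonneg_right h1' hab
        _ = C₁ * C₁ ^ L.length * (C₂ * C₂ ^ L.length) * ‖a - b‖ := by ring
    have expand : C₁ * C₁ ^ L.length * (C₂ * C₂ ^ L.length) * (‖a - b‖ + Ssum)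
        = C₁ * C₁ ^ L.length * (C₂ * C₂ ^ L.length) * ‖a - b‖
          + C₁ * C₁ ^ L.length * (C₂ * C₂ ^ L.length) * Ssum := by ring
    linarith

end AuxList

section AuxProd

lemma semigrProd_norm_le {n : ℕ} (A : Fin n → GenOp X) {C : ℝ} (hC : 1 ≤ C)
    (u : Fin n → ℝ) (hA : ∀ i, ‖(A i).T (u i)‖ ≤ C) : ‖semigrProd A u‖ ≤ C ^ n := by
  have h := list_prod_norm_le hC (List.ofFn fun i => (A i).T (u i)) (by
    intro a ha
    rw [List.mem_ofFn] at ha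
    obtain ⟨i, rfl⟩ := ha
    exact hA i)
  simpa [semigrProd] using h

lemma semigrProd_sub_mem (E : ClosedOperatorIdeal X) {n : ℕ} (A B : Fin n → GenOp X)
    (u : Fin n → ℝ) (hsub : ∀ i, (A i).T (u i) - (B i).T (u i) ∈ E.carrier) :
    semigrProd A u - semigrProd B u ∈ E.carrier :=
  list_prod_sub_mem E (list_forall₂_ofFn hsub)

lemma semigrProd_sub_norm {n : ℕ} (A B : Fin n → GenOp X) (u : Fin n → ℝ)
    {C₁ C₂ : ℝ} (h₁ : 1 ≤ C₁) (h₂ : 1 ≤ C₂)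
    (hA : ∀ i, ‖(A i).T (u i)‖ ≤ C₁) (hB : ∀ i, ‖(B i).T (u i)‖ ≤ C₂) :
    ‖semigrProd A u - semigrProd B u‖
      ≤ C₁ ^ n * C₂ ^ n * ∑ i, ‖(A i).T (u i) - (B i).T (u i)‖ := by
  have h := list_prod_sub_norm h₁ h₂ (List.ofFn fun i => (A i).T (u i))
    (List.ofFn fun i => (B i).T (u i)) (by simp)
    (by
      intro a ha
      rw [List.mem_ofFn] at ha
      obtain ⟨i, rfl⟩ := ha
      exact hA i)
    (by
      intro b hb
      rw [List.mem_ofFn] at hb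
      obtain ⟨i, rfl⟩ := hb
      exact hB i)
  rw [list_zipWith_ofFn, List.sum_ofFn, List.length_ofFn] at h
  exact h

open Filter Set in
lemma semigrProd_continuousOn :
    ∀ {n : ℕ} (A : Fin n → GenOp X) {M : ℝ}
      (_ : ∀ i (t : ℝ), 0 ≤ t → ‖(A i).T t‖ ≤ M) (x : X),
      ContinuousOn (fun u : Fin n → ℝ => semigrProd A u x) {u | ∀ i, 0 ≤ u i}
  | 0, A, M, hM, x => by
    intro u hu
    simp only [semigrProd, List.ofFn_zero, List.prod_nil, ContinuousLinearMap.one_apply]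
    exact continuousWithinAt_const
  | m + 1, A, M, hM, x => by
    intro u₀ hu₀
    have hrw : ∀ u : Fin (m + 1) → ℝ, semigrProd A u x
        = (A 0).T (u 0) (semigrProd (fun i : Fin m => A i.succ) (fun i => u i.succ) x) := by
      intro u
      simp only [semigrProd, List.ofFn_succ, List.prod_cons, ContinuousLinearMap.mul_apply]
    simp only [ContinuousWithinAt, hrw]
    have hτ : Tendsto (fun u : Fin (m + 1) → ℝ => u 0)
        (nhdsWithin u₀ {u | ∀ i, 0 ≤ u i}) (nhds (u₀ 0)) :=
      ((continuous_apply 0).tendsto u₀).mono_left nhdsWithin_le_nhds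
    have hτ0 : ∀ᶠ u in nhdsWithin u₀ {u | ∀ i, 0 ≤ u i}, 0 ≤ u 0 := by
      filter_upwards [self_mem_nhdsWithin] with u hu
      exact hu 0
    have hproj : ContinuousWithinAt (fun u : Fin (m + 1) → ℝ => fun i : Fin m => u i.succ)
        {u | ∀ i, 0 ≤ u i} u₀ :=
      (continuous_pi fun i => continuous_apply i.succ).continuousWithinAt
    have hz : Tendsto (fun u : Fin (m + 1) → ℝ =>
        semigrProd (fun i : Fin m => A i.succ) (fun i => u i.succ) x)
        (nhdsWithin u₀ {u | ∀ i, 0 ≤ u i})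
        (nhds (semigrProd (fun i : Fin m => A i.succ) (fun i => u₀ i.succ) x)) := by
      have ih := semigrProd_continuousOn (fun i : Fin m => A i.succ)
        (fun i t ht => hM i.succ t ht) x
      exact (ih _ (fun i => hu₀ i.succ)).comp hproj (show MapsTo (fun u : Fin (m + 1) → ℝ => fun i : Fin m => u i.succ) {u | ∀ i, 0 ≤ u i}
        {u | ∀ i : Fin m, 0 ≤ u i} from fun u hu i => hu i.succ)
    exact (A 0).tendsto_T_apply (hM 0) (hu₀ 0) hτ hτ0 hz

end AuxProd

lemma min_le_two_mul_one_sub_exp {τ : ℝ} (hτ : 0 ≤ τ) :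
    min 1 τ ≤ 2 * (1 - Real.exp (-τ)) := by
  have h2 : (2:ℝ) ≤ Real.exp 1 := by
    have := Real.add_one_le_exp 1
    linarith
  have hmul : Real.exp (-1) * Real.exp 1 = 1 := by
    rw [← Real.exp_add]
    norm_num
  have he : Real.exp (-1) ≤ 1/2 := by
    nlinarith [Real.exp_pos (-1), mul_le_mul_of_nonneg_left h2 (le_of_lt (Real.exp_pos (-1)))]
  rcases le_total τ 1 with h | h
  · have hconv := convexOn_exp.2 (Set.mem_univ (0:ℝ)) (Set.mem_univ (-1:ℝ))
      (by linarith : (0:ℝ) ≤ 1 - τ) hτ (by ring)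
    simp only [smul_eq_mul, mul_zero, mul_neg, mul_one, zero_add, Real.exp_zero] at hconv
    rw [min_eq_right h]
    nlinarith [mul_nonneg hτ (by linarith : (0:ℝ) ≤ 1/2 - Real.exp (-1))]
  · rw [min_eq_left h]
    have hee : Real.exp (-τ) ≤ Real.exp (-1) := Real.exp_le_exp.2 (by linarith)
    linarith

/-- **Theorem 3.** Let `𝓔` be a closed ideal of `ℒ(X)` with the strong convex
compactness property and `ψ ∈ 𝒯ₙ`.  For commuting families `A`, `B` from `Gen(X)ⁿ`
with `Aᵢ - Bᵢ ∈ 𝓔` and `D(Aᵢ) = D(Bᵢ)`, the (bounded) operator `ψ(A) - ψ(B)`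
belongs to `𝓔` as well. -/
theorem bernstein_perturbation_ideal_SCCP {n : ℕ} (hn : 0 < n) (ρ : BernsteinMeasure n)
    (E : ClosedOperatorIdeal X) (hE : HasSCCP E.carrier)
    (A B : Fin n → GenOp X)
    (hAcomm : ∀ i j, (A i).Commutes (A j)) (hBcomm : ∀ i j, (B i).Commutes (B j))
    (MA MB : ℝ)
    (hMA : ∀ i, ∀ t : ℝ, 0 ≤ t → ‖(A i).T t‖ ≤ MA)
    (hMB : ∀ i, ∀ t : ℝ, 0 ≤ t → ‖(B i).T t‖ ≤ MB)
    (hdom : ∀ i, (A i).dom = (B i).dom)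
    (hdense : ∀ i, Dense ((A i).dom : Set X))
    (D : Fin n → (X →L[ℂ] X))
    (hD : ∀ i, ∀ x ∈ (A i).dom, D i x = (A i).gen x - (B i).gen x)
    (hDE : ∀ i, D i ∈ E.carrier) :
    ∃ S : X →L[ℂ] X,
      (∀ x ∈ ⨅ i, (A i).dom, S x = ∫ u, (semigrProd A u x - semigrProd B u x) ∂ρ.μ) ∧
      S ∈ E.carrier := by
  classical
  obtain ⟨i₀⟩ : Nonempty (Fin n) := ⟨⟨0, hn⟩⟩
  have hMA0 : 0 ≤ MA := le_trans (norm_nonneg _) (hMA i₀ 0 le_rfl)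
  have hMB0 : 0 ≤ MB := le_trans (norm_nonneg _) (hMB i₀ 0 le_rfl)
  set C₁ : ℝ := max MA 1 with hC₁
  set C₂ : ℝ := max MB 1 with hC₂
  have h₁ : 1 ≤ C₁ := le_max_right _ _
  have h₂ : 1 ≤ C₂ := le_max_right _ _
  have hTA : ∀ (u : Fin n → ℝ) i, 0 ≤ u i → ‖(A i).T (u i)‖ ≤ C₁ := fun u i hu =>
    (hMA i _ hu).trans (le_max_left _ _)
  have hTB : ∀ (u : Fin n → ℝ) i, 0 ≤ u i → ‖(B i).T (u i)‖ ≤ C₂ := fun u i hu =>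
    (hMB i _ hu).trans (le_max_left _ _)
  -- single coordinate facts
  have hTsub_mem : ∀ i (t : ℝ), 0 ≤ t → (A i).T t - (B i).T t ∈ E.carrier := fun i t ht =>
    T_sub_mem E hE (A i) (B i) (hMA i) (hMB i) (hdom i) (hdense i) (D i) (hD i) (hDE i) ht
  have hTsub_norm : ∀ i (t : ℝ), 0 ≤ t →
      ‖(A i).T t - (B i).T t‖ ≤ MA * ‖D i‖ * MB * t := fun i t ht =>
    T_sub_norm (A i) (B i) (hMA i) (hMB i) (hdom i) (hdense i) (D i) (hD i) ht
  -- the positive orthant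
  set Pos : Set (Fin n → ℝ) := {u | ∀ i, 0 ≤ u i} with hPos
  have hPosMeas : MeasurableSet Pos := by
    have : Pos = ⋂ i, {u : Fin n → ℝ | 0 ≤ u i} := by
      ext u; simp [hPos, Set.mem_iInter]
    rw [this]
    exact MeasurableSet.iInter fun i =>
      measurableSet_le measurable_const (measurable_pi_apply i)
  have haePos : ∀ᵐ u ∂ρ.μ, u ∈ Pos ∧ u ≠ 0 := by
    rw [MeasureTheory.ae_iff]
    refine measure_mono_null ?_ ρ.support
    intro u hu
    simpa [hPos] using hu
  -- norm bound for the integrand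
  set KM : ℝ := max (C₁ ^ n + C₂ ^ n) (C₁ ^ n * C₂ ^ n * (MA * MB * ∑ i, ‖D i‖)) with hKM
  have hKM0 : 0 ≤ KM := le_trans (by positivity) (le_max_left _ _)
  set g₀ : (Fin n → ℝ) → ℝ := fun u => 1 - Real.exp (-(∑ i, u i)) with hg₀def
  have hop : ∀ u ∈ Pos, ‖semigrProd A u - semigrProd B u‖ ≤ 2 * KM * g₀ u := by
    intro u hu
    have hsum0 : 0 ≤ ∑ i, u i := Finset.sum_nonneg fun i _ => hu i
    have b1 : ‖semigrProd A u - semigrProd B u‖ ≤ C₁ ^ n + C₂ ^ n := by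
      refine (norm_sub_le _ _).trans (add_le_add ?_ ?_)
      · exact semigrProd_norm_le A h₁ u (fun i => hTA u i (hu i))
      · exact semigrProd_norm_le B h₂ u (fun i => hTB u i (hu i))
    have b2 : ‖semigrProd A u - semigrProd B u‖
        ≤ C₁ ^ n * C₂ ^ n * (MA * MB * ∑ i, ‖D i‖) * ∑ i, u i := by
      refine (semigrProd_sub_norm A B u h₁ h₂ (fun i => hTA u i (hu i))
        (fun i => hTB u i (hu i))).trans ?_
      have hterm : ∑ i, ‖(A i).T (u i) - (B i).T (u i)‖
          ≤ (MA * MB * ∑ i, ‖D i‖) * ∑ i, u i := by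
        calc ∑ i, ‖(A i).T (u i) - (B i).T (u i)‖
            ≤ ∑ i, MA * ‖D i‖ * MB * u i :=
              Finset.sum_le_sum fun i _ => hTsub_norm i (u i) (hu i)
          _ ≤ ∑ i, MA * ‖D i‖ * MB * ∑ j, u j := by
              refine Finset.sum_le_sum fun i _ => ?_
              refine mul_le_mul_of_nonneg_left ?_ (by positivity)
              exact Finset.single_le_sum (fun j _ => hu j) (Finset.mem_univ i)
          _ = (MA * MB * ∑ i, ‖D i‖) * ∑ j, u j := by
              rw [← Finset.sum_mul]
              congr 1
              rw [Finset.mul_sum]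
              refine Finset.sum_congr rfl fun i _ => by ring
      calc C₁ ^ n * C₂ ^ n * ∑ i, ‖(A i).T (u i) - (B i).T (u i)‖
          ≤ C₁ ^ n * C₂ ^ n * ((MA * MB * ∑ i, ‖D i‖) * ∑ i, u i) :=
            mul_le_mul_of_nonneg_left hterm (by positivity)
        _ = C₁ ^ n * C₂ ^ n * (MA * MB * ∑ i, ‖D i‖) * ∑ i, u i := by ring
    have hminle : ‖semigrProd A u - semigrProd B u‖ ≤ KM * min 1 (∑ i, u i) := by
      rcases le_total (∑ i, u i) 1 with h | h
      · rw [min_eq_right h]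
        refine b2.trans ?_
        exact mul_le_mul_of_nonneg_right (le_max_right _ _) hsum0
      · rw [min_eq_left h]
        rw [mul_one]
        exact b1.trans (le_max_left _ _)
    refine hminle.trans ?_
    have := min_le_two_mul_one_sub_exp hsum0
    calc KM * min 1 (∑ i, u i) ≤ KM * (2 * (1 - Real.exp (-(∑ i, u i)))) :=
          mul_le_mul_of_nonneg_left this hKM0
      _ = 2 * KM * g₀ u := by rw [hg₀def]; ring
  have hFbound : ∀ u ∈ Pos, ∀ x : X,
      ‖semigrProd A u x - semigrProd B u x‖ ≤ 2 * KM * g₀ u * ‖x‖ := by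
    intro u hu x
    have h1 : semigrProd A u x - semigrProd B u x = (semigrProd A u - semigrProd B u) x := rfl
    rw [h1]
    exact ((semigrProd A u - semigrProd B u).le_opNorm x).trans
      (mul_le_mul_of_nonneg_right (hop u hu) (norm_nonneg _))
  -- integrability of the comparison function
  have hg : Integrable g₀ ρ.μ := by
    have h0 := ρ.integrable (fun _ => (-1 : ℝ)) (fun _ => by norm_num)
    have h1 := h0.neg
    refine h1.congr ?_
    refine Filter.Eventually.of_forall fun u => ?_
    have hsum : (∑ i, (-1 : ℝ) * u i) = -(∑ i, u i) := by
      rw [← Finset.sum_neg_distrib]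
      exact Finset.sum_congr rfl fun i _ => by ring
    show -(Real.exp (∑ i, (-1 : ℝ) * u i) - 1) = 1 - Real.exp (-(∑ i, u i))
    rw [hsum, neg_sub]
  -- a.e. strong measurability and integrability of the vector integrand
  have hcontAB : ∀ x : X, ContinuousOn
      (fun u : Fin n → ℝ => semigrProd A u x - semigrProd B u x) Pos := by
    intro x
    exact (semigrProd_continuousOn A hMA x).sub (semigrProd_continuousOn B hMB x)
  have hres : ρ.μ.restrict Pos = ρ.μ := by
    apply Measure.restrict_eq_self_of_ae_mem
    filter_upwards [haePos] with u hu
    exact hu.1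
  have hFmeas : ∀ x : X, AEStronglyMeasurable
      (fun u => semigrProd A u x - semigrProd B u x) ρ.μ := by
    intro x
    have h1 := (hcontAB x).aestronglyMeasurable (μ := ρ.μ) hPosMeas
    rwa [hres] at h1
  have hgx : ∀ x : X, Integrable (fun u => 2 * KM * g₀ u * ‖x‖) ρ.μ := fun x =>
    (hg.const_mul (2 * KM)).mul_const ‖x‖
  have hFint : ∀ x : X, Integrable
      (fun u => semigrProd A u x - semigrProd B u x) ρ.μ := by
    intro x
    refine (hgx x).mono' (hFmeas x) ?_
    filter_upwards [haePos] with u hu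
    exact hFbound u hu.1 x
  -- the candidate operator S
  set Slin : X →ₗ[ℂ] X :=
    { toFun := fun x => ∫ u, (semigrProd A u x - semigrProd B u x) ∂ρ.μ
      map_add' := by
        intro x y
        have hpt : ∀ u : Fin n → ℝ, semigrProd A u (x + y) - semigrProd B u (x + y)
            = (semigrProd A u x - semigrProd B u x) + (semigrProd A u y - semigrProd B u y) := by
          intro u; rw [map_add, map_add]; abel
        show (∫ u, (semigrProd A u (x + y) - semigrProd B u (x + y)) ∂ρ.μ)
            = (∫ u, (semigrProd A u x - semigrProd B u x) ∂ρ.μ)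
              + ∫ u, (semigrProd A u y - semigrProd B u y) ∂ρ.μ
        rw [← integral_add (hFint x) (hFint y)]
        simp only [hpt]
      map_smul' := by
        intro c x
        have hpt : ∀ u : Fin n → ℝ, semigrProd A u (c • x) - semigrProd B u (c • x)
            = c • (semigrProd A u x - semigrProd B u x) := by
          intro u; rw [_root_.map_smul, _root_.map_smul, smul_sub]
        show (∫ u, (semigrProd A u (c • x) - semigrProd B u (c • x)) ∂ρ.μ)
            = c • ∫ u, (semigrProd A u x - semigrProd B u x) ∂ρ.μ
        rw [← integral_smul]
        simp only [hpt] } with hSlin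
  have hg0nn : ∀ᵐ u ∂ρ.μ, 0 ≤ g₀ u := by
    filter_upwards [haePos] with u hu
    have hsum0 : 0 ≤ ∑ i, u i := Finset.sum_nonneg fun i _ => hu.1 i
    have : Real.exp (-(∑ i, u i)) ≤ 1 := by
      rw [← Real.exp_zero]
      exact Real.exp_le_exp.2 (by linarith)
    show (0:ℝ) ≤ 1 - Real.exp (-(∑ i, u i))
    linarith
  have hSbound : ∀ x : X, ‖Slin x‖ ≤ (2 * KM * ∫ u, g₀ u ∂ρ.μ) * ‖x‖ := by
    intro x
    have h1 : ‖Slin x‖ ≤ ∫ u, ‖semigrProd A u x - semigrProd B u x‖ ∂ρ.μ :=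
      norm_integral_le_integral_norm _
    have h2 : ∫ u, ‖semigrProd A u x - semigrProd B u x‖ ∂ρ.μ
        ≤ ∫ u, 2 * KM * g₀ u * ‖x‖ ∂ρ.μ := by
      refine integral_mono_ae ((hFint x).norm) (hgx x) ?_
      filter_upwards [haePos] with u hu
      exact hFbound u hu.1 x
    have h3 : ∫ u, 2 * KM * g₀ u * ‖x‖ ∂ρ.μ = (2 * KM * ∫ u, g₀ u ∂ρ.μ) * ‖x‖ := by
      rw [integral_mul_const, integral_const_mul]
    linarith
  set S : X →L[ℂ] X := Slin.mkContinuous _ hSbound with hS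
  refine ⟨S, fun x _ => rfl, ?_⟩
  -- truncated operators
  set Tset : ℕ → Set (Fin n → ℝ) :=
    fun k => Pos ∩ {u | 1 / (k + 1 : ℝ) ≤ ∑ i, u i} with hTset
  have hTmeas : ∀ k, MeasurableSet (Tset k) := by
    intro k
    exact hPosMeas.inter
      (measurableSet_le measurable_const (Finset.measurable_sum _ fun i _ => measurable_pi_apply i))
  have hTfin : ∀ k, IsFiniteMeasure (ρ.μ.restrict (Tset k)) := by
    intro k
    constructor
    rw [Measure.restrict_apply_univ]
    have hck : (0:ℝ) < 1 - Real.exp (-(1 / (k + 1 : ℝ))) := by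
      have h0 : (0:ℝ) < 1 / (k + 1 : ℝ) := by positivity
      have : Real.exp (-(1 / (k + 1 : ℝ))) < Real.exp 0 :=
        Real.exp_lt_exp.2 (by linarith)
      rw [Real.exp_zero] at this
      linarith
    refine lt_of_le_of_lt (measure_mono ?_) (hg.measure_ge_lt_top hck)
    intro u hu
    have h1 : 1 / (k + 1 : ℝ) ≤ ∑ i, u i := hu.2
    have h2 : Real.exp (-(∑ i, u i)) ≤ Real.exp (-(1 / (k + 1 : ℝ))) :=
      Real.exp_le_exp.2 (by linarith)
    show (1 : ℝ) - Real.exp (-(1 / (k + 1 : ℝ))) ≤ 1 - Real.exp (-(∑ i, u i))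
    linarith
  -- operator-valued integrand for SCCP
  set U : (Fin n → ℝ) → X →L[ℂ] X := fun u =>
    if u ∈ Pos then semigrProd A u - semigrProd B u else 0 with hU
  have hUE : ∀ u, U u ∈ E.carrier := by
    intro u
    by_cases h : u ∈ Pos
    · simpa [hU, h] using
        semigrProd_sub_mem E A B u (fun i => hTsub_mem i (u i) (h i))
    · simpa [hU, h] using E.zero_mem
  have hUbound : ∀ u, ‖U u‖ ≤ C₁ ^ n + C₂ ^ n := by
    intro u
    by_cases h : u ∈ Pos
    · simp only [hU, if_pos h]
      refine (norm_sub_le _ _).trans (add_le_add ?_ ?_)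
      · exact semigrProd_norm_le A h₁ u (fun i => hTA u i (h i))
      · exact semigrProd_norm_le B h₂ u (fun i => hTB u i (h i))
    · simp only [hU, if_neg h, norm_zero]
      positivity
  have hUmeas : ∀ k, ∀ x : X, AEStronglyMeasurable (fun u => U u x) (ρ.μ.restrict (Tset k)) := by
    intro k x
    have h1 := (hcontAB x).aestronglyMeasurable (μ := ρ.μ) hPosMeas
    have h2 : AEStronglyMeasurable (fun u => semigrProd A u x - semigrProd B u x)
        (ρ.μ.restrict (Tset k)) :=
      h1.mono_measure (Measure.restrict_mono Set.inter_subset_left le_rfl)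
    refine h2.congr ?_
    filter_upwards [ae_restrict_mem (hTmeas k)] with u hu
    simp [hU, hu.1]
  -- the truncated operators and their membership
  have hSk : ∀ k : ℕ, ∃ Sk : X →L[ℂ] X,
      (∀ x : X, Sk x = ∫ u in Tset k, (semigrProd A u x - semigrProd B u x) ∂ρ.μ) ∧
      Sk ∈ E.carrier := by
    intro k
    set Sklin : X →ₗ[ℂ] X :=
      { toFun := fun x => ∫ u in Tset k, (semigrProd A u x - semigrProd B u x) ∂ρ.μ
        map_add' := by
          intro x y
          have hpt : ∀ u : Fin n → ℝ, semigrProd A u (x + y) - semigrProd B u (x + y)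
              = (semigrProd A u x - semigrProd B u x) + (semigrProd A u y - semigrProd B u y) := by
            intro u; rw [map_add, map_add]; abel
          show (∫ u in Tset k, (semigrProd A u (x + y) - semigrProd B u (x + y)) ∂ρ.μ)
              = (∫ u in Tset k, (semigrProd A u x - semigrProd B u x) ∂ρ.μ)
                + ∫ u in Tset k, (semigrProd A u y - semigrProd B u y) ∂ρ.μ
          rw [← integral_add ((hFint x).restrict) ((hFint y).restrict)]
          simp only [hpt]
        map_smul' := by
          intro c x
          have hpt : ∀ u : Fin n → ℝ, semigrProd A u (c • x) - semigrProd B u (c • x)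
              = c • (semigrProd A u x - semigrProd B u x) := by
            intro u; rw [_root_.map_smul, _root_.map_smul, smul_sub]
          show (∫ u in Tset k, (semigrProd A u (c • x) - semigrProd B u (c • x)) ∂ρ.μ)
              = c • ∫ u in Tset k, (semigrProd A u x - semigrProd B u x) ∂ρ.μ
          rw [← integral_smul]
          simp only [hpt] } with hSklin
    have hSkbound : ∀ x : X, ‖Sklin x‖ ≤ (2 * KM * ∫ u, g₀ u ∂ρ.μ) * ‖x‖ := by
      intro x
      have h1 : ‖Sklin x‖ ≤ ∫ u in Tset k, ‖semigrProd A u x - semigrProd B u x‖ ∂ρ.μ :=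
        norm_integral_le_integral_norm _
      have h2 : ∫ u in Tset k, ‖semigrProd A u x - semigrProd B u x‖ ∂ρ.μ
          ≤ ∫ u, ‖semigrProd A u x - semigrProd B u x‖ ∂ρ.μ := by
        refine integral_mono_measure Measure.restrict_le_self ?_ ((hFint x).norm)
        exact Filter.Eventually.of_forall fun u => norm_nonneg _
      have h3 : ∫ u, ‖semigrProd A u x - semigrProd B u x‖ ∂ρ.μ
          ≤ ∫ u, 2 * KM * g₀ u * ‖x‖ ∂ρ.μ := by
        refine integral_mono_ae ((hFint x).norm) (hgx x) ?_
        filter_upwards [haePos] with u hu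
        exact hFbound u hu.1 x
      have h4 : ∫ u, 2 * KM * g₀ u * ‖x‖ ∂ρ.μ = (2 * KM * ∫ u, g₀ u ∂ρ.μ) * ‖x‖ := by
        rw [integral_mul_const, integral_const_mul]
      linarith
    refine ⟨Sklin.mkContinuous _ hSkbound, fun x => rfl, ?_⟩
    refine hE (Fin n → ℝ) inferInstance (ρ.μ.restrict (Tset k)) (hTfin k) U hUE (hUmeas k)
      ⟨C₁ ^ n + C₂ ^ n, hUbound⟩ _ fun x => ?_
    show ∫ u in Tset k, (semigrProd A u x - semigrProd B u x) ∂ρ.μ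
      = ∫ u, U u x ∂(ρ.μ.restrict (Tset k))
    refine setIntegral_congr_fun (hTmeas k) fun u hu => ?_
    simp [hU, hu.1]
  choose Sk hSkEq hSkMem using hSk
  -- convergence of the truncations to S in operator norm
  set δ : ℕ → ℝ := fun k => ∫ u in (Tset k)ᶜ, g₀ u ∂ρ.μ with hδdef
  have hδnn : ∀ k, 0 ≤ δ k := by
    intro k
    refine integral_nonneg_of_ae ?_
    exact ae_restrict_of_ae hg0nn
  have hdiffnorm : ∀ k, ‖S - Sk k‖ ≤ 2 * KM * δ k := by
    intro k
    refine ContinuousLinearMap.opNorm_le_bound _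
      (mul_nonneg (by positivity) (hδnn k)) fun x => ?_
    have hsplit : (∫ u in Tset k, (semigrProd A u x - semigrProd B u x) ∂ρ.μ)
        + (∫ u in (Tset k)ᶜ, (semigrProd A u x - semigrProd B u x) ∂ρ.μ)
        = ∫ u, (semigrProd A u x - semigrProd B u x) ∂ρ.μ :=
      integral_add_compl (hTmeas k) (hFint x)
    have hSx : (S - Sk k) x = ∫ u in (Tset k)ᶜ, (semigrProd A u x - semigrProd B u x) ∂ρ.μ := by
      have h1 : (S - Sk k) x = S x - Sk k x := rfl
      rw [h1, hSkEq k x]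
      have h2 : S x = ∫ u, (semigrProd A u x - semigrProd B u x) ∂ρ.μ := rfl
      rw [h2, ← hsplit]
      abel
    rw [hSx]
    have h1 : ‖∫ u in (Tset k)ᶜ, (semigrProd A u x - semigrProd B u x) ∂ρ.μ‖
        ≤ ∫ u in (Tset k)ᶜ, ‖semigrProd A u x - semigrProd B u x‖ ∂ρ.μ :=
      norm_integral_le_integral_norm _
    have h2 : ∫ u in (Tset k)ᶜ, ‖semigrProd A u x - semigrProd B u x‖ ∂ρ.μ
        ≤ ∫ u in (Tset k)ᶜ, 2 * KM * g₀ u * ‖x‖ ∂ρ.μ := by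
      refine integral_mono_ae ((hFint x).norm.restrict) ((hgx x).restrict) ?_
      refine ae_restrict_of_ae ?_
      filter_upwards [haePos] with u hu
      exact hFbound u hu.1 x
    have h3 : ∫ u in (Tset k)ᶜ, 2 * KM * g₀ u * ‖x‖ ∂ρ.μ = 2 * KM * δ k * ‖x‖ := by
      show ∫ u in (Tset k)ᶜ, 2 * KM * g₀ u * ‖x‖ ∂ρ.μ
        = 2 * KM * (∫ u in (Tset k)ᶜ, g₀ u ∂ρ.μ) * ‖x‖
      rw [integral_mul_const, integral_const_mul]
    linarith
  have hδ0 : Filter.Tendsto δ Filter.atTop (nhds 0) := by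
    have hrw : ∀ k, δ k = ∫ u, ((Tset k)ᶜ).indicator g₀ u ∂ρ.μ := by
      intro k
      rw [integral_indicator (hTmeas k).compl]
    have hδeq : δ = fun k => ∫ u, ((Tset k)ᶜ).indicator g₀ u ∂ρ.μ := funext hrw
    rw [hδeq]
    have := tendsto_integral_of_dominated_convergence (μ := ρ.μ)
      (F := fun k => ((Tset k)ᶜ).indicator g₀) (f := fun _ => 0) (fun u => ‖g₀ u‖)
      (fun k => hg.aestronglyMeasurable.indicator (hTmeas k).compl)
      (hg.norm)
      (fun k => Filter.Eventually.of_forall fun u => norm_indicator_le_norm_self g₀ u)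
      ?_
    · simpa using this
    · filter_upwards [haePos] with u hu
      have hupos : 0 < ∑ i, u i := by
        have h1 : ∃ i, u i ≠ 0 := by
          by_contra hcon
          push_neg at hcon
          exact hu.2 (funext hcon)
        obtain ⟨i, hi⟩ := h1
        have h2 : 0 < u i := lt_of_le_of_ne (hu.1 i) (Ne.symm hi)
        exact lt_of_lt_of_le h2 (Finset.single_le_sum (fun j _ => hu.1 j) (Finset.mem_univ i))
      have hev : ∀ᶠ k : ℕ in Filter.atTop, ((Tset k)ᶜ).indicator g₀ u = 0 := by
        have h1 : Filter.Tendsto (fun k : ℕ => 1 / (k + 1 : ℝ)) Filter.atTop (nhds 0) :=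
          tendsto_one_div_add_atTop_nhds_zero_nat
        filter_upwards [h1.eventually_lt_const hupos] with k hk
        have hmem : u ∈ Tset k := ⟨hu.1, le_of_lt hk⟩
        simp [Set.indicator_of_notMem, hmem]
      exact Filter.Tendsto.congr' (hev.mono fun k hk => hk.symm) tendsto_const_nhds
  have hconv : Filter.Tendsto Sk Filter.atTop (nhds S) := by
    rw [tendsto_iff_norm_sub_tendsto_zero]
    have hb : ∀ k, ‖Sk k - S‖ ≤ 2 * KM * δ k := by
      intro k
      rw [norm_sub_rev]
      exact hdiffnorm k
    have hlim : Filter.Tendsto (fun k => 2 * KM * δ k) Filter.atTop (nhds 0) := by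
      have := hδ0.const_mul (2 * KM)
      simpa using this
    exact squeeze_zero (fun k => norm_nonneg _) hb hlim
  exact E.isClosed.mem_of_tendsto hconv (Filter.Eventually.of_forall hSkMem)
end
end
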